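/- arXiv:2601.14491 — 5 statements merged into one kernel-verified Lean document; each statement's English description precedes it below -/
import Mathlib

section
/- Hermite's theorem: let p be a monic squarefree real polynomial of degree n with distinct complex roots z_1,...,z_n, and let q be a real polynomial. Then the signature of the real symmetric n×n matrix H_q with entries H_q[i,j] = ∑_{k=1}^n z_k^{i+j-2} q(z_k) equals N_+ − N_−, where N_+ = #{x ∈ ℝ : p(x) = 0, q(x) > 0} and N_− = #{x ∈ ℝ : p(x) = 0, q(x) < 0}. -/
open Polynomial Matrix

/-- The signature of a real symmetric matrix: the number of positive eigenvalues
minus the number of negative eigenvalues (with multiplicity). -/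
noncomputable def signature {n : ℕ} (A : Matrix (Fin n) (Fin n) ℝ) : ℤ :=
  if h : A.IsHermitian then
    ((Finset.univ.filter fun i => 0 < h.eigenvalues i).card : ℤ) -
    ((Finset.univ.filter fun i => h.eigenvalues i < 0).card : ℤ)
  else 0

section HermiteAux

open Matrix Finset Module Submodule

variable {n : ℕ}

noncomputable def coordSpan (s : Finset (Fin n)) : Submodule ℝ (Fin n → ℝ) :=
  Submodule.span ℝ ((fun k => (Pi.single k 1 : Fin n → ℝ)) '' s)

lemma coordSpan_support {s : Finset (Fin n)} {x : Fin n → ℝ} (hx : x ∈ coordSpan s)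
    {k : Fin n} (hk : k ∉ s) : x k = 0 := by
  induction hx using Submodule.span_induction with
  | mem v hv =>
    obtain ⟨j, hj, rfl⟩ := hv
    exact Pi.single_eq_of_ne (fun h : k = j => hk (h ▸ hj)) 1
  | zero => rfl
  | add a b _ _ ha hb => simp [ha, hb]
  | smul c a _ ha => simp [ha]

lemma finrank_coordSpan (s : Finset (Fin n)) : finrank ℝ (coordSpan s) = s.card := by
  have hli : LinearIndependent ℝ (fun k : {k // k ∈ s} => (Pi.single (k : Fin n) 1 : Fin n → ℝ)) := by
    have := (Pi.basisFun ℝ (Fin n)).linearIndependent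
    have h2 := this.comp (Subtype.val : {k // k ∈ s} → Fin n) Subtype.val_injective
    have he : (fun k : {k // k ∈ s} => (Pi.single (k : Fin n) 1 : Fin n → ℝ)) =
        (⇑(Pi.basisFun ℝ (Fin n)) ∘ Subtype.val) := by
      funext k; simp [Pi.basisFun_apply]
    rw [he]; exact h2
  have : coordSpan s = Submodule.span ℝ (Set.range fun k : {k // k ∈ s} => (Pi.single (k : Fin n) 1 : Fin n → ℝ)) := by
    rw [coordSpan]
    congr 1
    ext v
    simp [Set.mem_image, Set.mem_range, Subtype.exists]
  rw [this, finrank_span_eq_card hli, Fintype.card_coe]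

lemma qform_eq (P : Matrix (Fin n) (Fin n) ℝ) (μ : Fin n → ℝ) (x : Fin n → ℝ) :
    x ⬝ᵥ ((Pᵀ * diagonal μ * P) *ᵥ x) = ∑ k, μ k * (P *ᵥ x) k ^ 2 := by
  rw [← Matrix.mulVec_mulVec, ← Matrix.mulVec_mulVec, Matrix.dotProduct_mulVec,
    Matrix.vecMul_transpose]
  simp [dotProduct, Matrix.mulVec_diagonal, sq]
  ring_nf
  exact Finset.sum_congr rfl fun k _ => by ring

lemma posCard_le (P Q : Matrix (Fin n) (Fin n) ℝ) (hP : IsUnit P.det) (hQ : IsUnit Q.det)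
    (μ ν : Fin n → ℝ) (h : Pᵀ * diagonal μ * P = Qᵀ * diagonal ν * Q) :
    (Finset.univ.filter fun k => 0 < ν k).card ≤ (Finset.univ.filter fun k => 0 < μ k).card := by
  classical
  set A := Pᵀ * diagonal μ * P with hA
  set s : Finset (Fin n) := Finset.univ.filter fun k => 0 < ν k with hs
  set t : Finset (Fin n) := Finset.univ.filter fun k => ¬ 0 < μ k with ht
  have hQi : Invertible Q := Q.invertibleOfIsUnitDet hQ
  have hPi : Invertible P := P.invertibleOfIsUnitDet hP
  have hQ1 : Invertible Q⁻¹ := by infer_instance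
  have hP1 : Invertible P⁻¹ := by infer_instance
  set W1 : Submodule ℝ (Fin n → ℝ) := (coordSpan s).map (Matrix.toLin' Q⁻¹) with hW1
  set W2 : Submodule ℝ (Fin n → ℝ) := (coordSpan t).map (Matrix.toLin' P⁻¹) with hW2
  -- positivity on W1
  have key1 : ∀ x ∈ W1, x ≠ 0 → 0 < x ⬝ᵥ (A *ᵥ x) := by
    intro x hx hx0
    obtain ⟨c, hc, rfl⟩ := hx
    rw [Matrix.toLin'_apply] at hx0 ⊢
    have hQc : Q *ᵥ (Q⁻¹ *ᵥ c) = c := by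
      rw [Matrix.mulVec_mulVec, Q.mul_nonsing_inv hQ, Matrix.one_mulVec]
    rw [h, qform_eq, hQc]
    have hc0 : c ≠ 0 := by rintro rfl; simp at hx0
    obtain ⟨k, hk⟩ := Function.ne_iff.mp hc0
    have hks : k ∈ s := by
      by_contra hns; exact hk (coordSpan_support hc hns)
    refine Finset.sum_pos' (fun j _ => ?_) ⟨k, Finset.mem_univ k, ?_⟩
    · by_cases hj : j ∈ s
      · have : 0 < ν j := (Finset.mem_filter.mp hj).2
        positivity
      · rw [coordSpan_support hc hj]; simp
    · have : 0 < ν k := (Finset.mem_filter.mp hks).2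
      have hνk : 0 < ν k := (Finset.mem_filter.mp hks).2
      exact mul_pos hνk (pow_two_pos_of_ne_zero hk)
  have key2 : ∀ x ∈ W2, x ⬝ᵥ (A *ᵥ x) ≤ 0 := by
    intro x hx
    obtain ⟨c, hc, rfl⟩ := hx
    rw [Matrix.toLin'_apply]
    have hPc : P *ᵥ (P⁻¹ *ᵥ c) = c := by
      rw [Matrix.mulVec_mulVec, P.mul_nonsing_inv hP, Matrix.one_mulVec]
    rw [qform_eq, hPc]
    refine Finset.sum_nonpos fun j _ => ?_
    by_cases hj : j ∈ t
    · have : ¬ 0 < μ j := (Finset.mem_filter.mp hj).2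
      have : μ j ≤ 0 := le_of_not_gt this
      nlinarith [sq_nonneg (c j)]
    · rw [coordSpan_support hc hj]; simp
  have hdisj : W1 ⊓ W2 = ⊥ := by
    rw [Submodule.eq_bot_iff]
    intro x hx
    by_contra hx0
    exact absurd (key2 x hx.2) (not_le.mpr (key1 x hx.1 hx0))
  have hd1 : finrank ℝ W1 = s.card := by
    rw [hW1, ← Matrix.toLinearEquiv'_apply Q⁻¹ hQ1]
    rw [show ((Q⁻¹.toLinearEquiv' hQ1 : Module.End ℝ (Fin n → ℝ))) =
      ((Q⁻¹.toLinearEquiv' hQ1 : (Fin n → ℝ) ≃ₗ[ℝ] (Fin n → ℝ)) : (Fin n → ℝ) →ₗ[ℝ] (Fin n → ℝ)) from rfl]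
    rw [LinearEquiv.finrank_map_eq, finrank_coordSpan]
  have hd2 : finrank ℝ W2 = t.card := by
    rw [hW2, ← Matrix.toLinearEquiv'_apply P⁻¹ hP1]
    rw [show ((P⁻¹.toLinearEquiv' hP1 : Module.End ℝ (Fin n → ℝ))) =
      ((P⁻¹.toLinearEquiv' hP1 : (Fin n → ℝ) ≃ₗ[ℝ] (Fin n → ℝ)) : (Fin n → ℝ) →ₗ[ℝ] (Fin n → ℝ)) from rfl]
    rw [LinearEquiv.finrank_map_eq, finrank_coordSpan]
  have hsum : finrank ℝ W1 + finrank ℝ W2 ≤ n := by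
    have := Submodule.finrank_sup_add_finrank_inf_eq W1 W2
    rw [hdisj] at this
    simp only [finrank_bot, add_zero] at this
    rw [← this]
    have := Submodule.finrank_le (W1 ⊔ W2)
    simpa using this
  have hcomp : (Finset.univ.filter fun k => 0 < μ k).card + t.card = n := by
    rw [ht, Finset.card_filter_add_card_filter_not]
    simp
  omega

lemma posCard_eq (P Q : Matrix (Fin n) (Fin n) ℝ) (hP : IsUnit P.det) (hQ : IsUnit Q.det)
    (μ ν : Fin n → ℝ) (h : Pᵀ * diagonal μ * P = Qᵀ * diagonal ν * Q) :
    (Finset.univ.filter fun k => 0 < ν k).card = (Finset.univ.filter fun k => 0 < μ k).card :=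
  le_antisymm (posCard_le P Q hP hQ μ ν h) (posCard_le Q P hQ hP ν μ h.symm)

lemma negCard_eq (P Q : Matrix (Fin n) (Fin n) ℝ) (hP : IsUnit P.det) (hQ : IsUnit Q.det)
    (μ ν : Fin n → ℝ) (h : Pᵀ * diagonal μ * P = Qᵀ * diagonal ν * Q) :
    (Finset.univ.filter fun k => ν k < 0).card = (Finset.univ.filter fun k => μ k < 0).card := by
  have h' : Pᵀ * diagonal (fun k => -μ k) * P = Qᵀ * diagonal (fun k => -ν k) * Q := by
    have h1 : (diagonal fun k => -μ k) = -diagonal μ := by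
      rw [← Matrix.diagonal_neg]
    have h2 : (diagonal fun k => -ν k) = -diagonal ν := by
      rw [← Matrix.diagonal_neg]
    rw [h1, h2, Matrix.mul_neg, Matrix.neg_mul, Matrix.mul_neg, Matrix.neg_mul, h]
  have := posCard_eq P Q hP hQ _ _ h'
  simpa [neg_pos] using this

lemma signature_eq_of_decomp (A : Matrix (Fin n) (Fin n) ℝ) (hA : A.IsHermitian)
    (P : Matrix (Fin n) (Fin n) ℝ) (hP : IsUnit P.det) (ν : Fin n → ℝ)
    (h : A = Pᵀ * diagonal ν * P) :
    signature A = ((Finset.univ.filter fun k => 0 < ν k).card : ℤ) -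
      ((Finset.univ.filter fun k => ν k < 0).card : ℤ) := by
  set U : Matrix (Fin n) (Fin n) ℝ := (hA.eigenvectorUnitary : Matrix (Fin n) (Fin n) ℝ) with hU
  have hdecomp : A = (Uᵀ)ᵀ * diagonal hA.eigenvalues * Uᵀ := by
    have := hA.spectral_theorem
    rw [RCLike.ofReal_real_eq_id] at this
    simp only [Function.id_comp] at this
    rw [Matrix.transpose_transpose, ← Matrix.conjTranspose_eq_transpose_of_trivial,
      ← Matrix.star_eq_conjTranspose]
    exact this
  have hUdet : IsUnit (Uᵀ).det := by
    rw [Matrix.det_transpose]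
    have hmem := hA.eigenvectorUnitary.2
    have := (Matrix.mem_unitaryGroup_iff.mp hmem)
    exact IsUnit.of_mul_eq_one _ (by rw [← Matrix.det_mul, this, Matrix.det_one])
  have hpos := posCard_eq (Uᵀ) P hUdet hP hA.eigenvalues ν (hdecomp.symm.trans h)
  have hneg := negCard_eq (Uᵀ) P hUdet hP hA.eigenvalues ν (hdecomp.symm.trans h)
  rw [signature, dif_pos hA, hpos, hneg]

end HermiteAux

/-- Hermite's theorem: for a monic squarefree real polynomial `p` of
degree `n` with distinct complex roots `z`, and a real polynomial `q`, the real
symmetric matrix with entries `∑ₖ zₖ^(i+j) q(zₖ)` has signature `N₊ - N₋` where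
`N₊` (resp. `N₋`) counts the real roots `x` of `p` with `q(x) > 0` (resp. `< 0`). -/
theorem hermite_theorem (n : ℕ) (p q : Polynomial ℝ)
    (hmonic : p.Monic) (hsf : Squarefree p) (hdeg : p.natDegree = n)
    (z : Fin n → ℂ) (hinj : Function.Injective z)
    (hroots : p.map (algebraMap ℝ ℂ) = ∏ i : Fin n, (X - C (z i)))
    (H : Matrix (Fin n) (Fin n) ℝ) (hsymm : H.IsHermitian)
    (hH : ∀ i j : Fin n, (H i j : ℂ) =
      ∑ k : Fin n, z k ^ ((i : ℕ) + (j : ℕ)) * (q.map (algebraMap ℝ ℂ)).eval (z k)) :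
    signature H =
      ((p.roots.toFinset.filter fun x => 0 < q.eval x).card : ℤ) -
      ((p.roots.toFinset.filter fun x => q.eval x < 0).card : ℤ) := by
  classical
  set f : ℝ →+* ℂ := (algebraMap ℝ ℂ) with hf
  set q' : ℂ → ℂ := fun w => (q.map f).eval w with hq'
  -- conjugation of evaluations of real polynomials
  have hconj : ∀ (r : Polynomial ℝ) (w : ℂ),
      (r.map f).eval ((starRingEnd ℂ) w) = (starRingEnd ℂ) ((r.map f).eval w) := by
    intro r w
    have h1 : (r.map f).map (starRingEnd ℂ) = r.map f := by
      rw [Polynomial.map_map]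
      congr 1
      ext x : 1
      simp [hf]
    conv_lhs => rw [← h1]
    rw [Polynomial.eval_map, Polynomial.eval₂_at_apply]
  -- evaluation at real points
  have hevalR : ∀ (r : Polynomial ℝ) (x : ℝ), (r.map f).eval (f x) = f (r.eval x) := by
    intro r x
    rw [Polynomial.eval_map, Polynomial.eval₂_at_apply]
  -- roots of the product
  have hprodroot : ∀ w : ℂ, (p.map f).eval w = 0 ↔ ∃ k, z k = w := by
    intro w
    rw [hroots, Polynomial.eval_prod, Finset.prod_eq_zero_iff]
    constructor
    · rintro ⟨k, -, hk⟩
      simp only [Polynomial.eval_sub, Polynomial.eval_X, Polynomial.eval_C] at hk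
      exact ⟨k, (sub_eq_zero.mp hk).symm⟩
    · rintro ⟨k, rfl⟩
      exact ⟨k, Finset.mem_univ k, by simp⟩
  have hzroot : ∀ k, (p.map f).eval (z k) = 0 := by
    intro k
    rw [hroots, Polynomial.eval_prod]
    exact Finset.prod_eq_zero (Finset.mem_univ k) (by simp)
  -- the conjugation involution on indices
  have hex : ∀ k, ∃ j, z j = (starRingEnd ℂ) (z k) := by
    intro k
    apply (hprodroot _).mp
    rw [hconj, hzroot, map_zero]
  set σ : Fin n → Fin n := fun k => (hex k).choose with hσdef
  have hσ : ∀ k, z (σ k) = (starRingEnd ℂ) (z k) := fun k => (hex k).choose_spec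
  have hσσ : ∀ k, σ (σ k) = k := by
    intro k
    apply hinj
    rw [hσ, hσ, Complex.conj_conj]
  have hσim : ∀ k, (z (σ k)).im = -(z k).im := by intro k; rw [hσ]; simp
  have hσfix : ∀ k, (z k).im = 0 → σ k = k := by
    intro k hk
    apply hinj
    rw [hσ, Complex.conj_eq_iff_im.mpr hk]
  have hσne : ∀ k, (z k).im ≠ 0 → σ k ≠ k := by
    intro k hk he
    apply hk
    have := hσ k
    rw [he] at this
    exact Complex.conj_eq_iff_im.mp this.symm
  have hq'σ : ∀ k, q' (z (σ k)) = (starRingEnd ℂ) (q' (z k)) := by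
    intro k; rw [hσ, hq']; exact hconj q (z k)
  -- square roots
  have hsq : ∀ k, ∃ w : ℂ, w ^ 2 = 2 * q' (z k) :=
    fun k => IsAlgClosed.exists_pow_nat_eq _ zero_lt_two
  set u : Fin n → ℂ := fun k => if q' (z k) = 0 then 1 else (hsq k).choose with hudef
  have hu2 : ∀ k, q' (z k) ≠ 0 → u k ^ 2 = 2 * q' (z k) := by
    intro k hk
    simp only [hudef, if_neg hk]
    exact (hsq k).choose_spec
  have hu0 : ∀ k, u k ≠ 0 := by
    intro k
    by_cases hk : q' (z k) = 0
    · simp [hudef, hk]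
    · intro h0
      apply hk
      have := hu2 k hk
      rw [h0] at this
      simpa using (mul_left_cancel₀ (two_ne_zero (α := ℂ)) (by rw [← this]; ring)).symm
  -- the congruence matrix and diagonal
  set P : Matrix (Fin n) (Fin n) ℝ := fun k i =>
    if (z k).im = 0 then ((z k) ^ (i : ℕ)).re
    else if 0 < (z k).im then (u k * z k ^ (i : ℕ)).re
    else (u (σ k) * z (σ k) ^ (i : ℕ)).im with hPdef
  set ν : Fin n → ℝ := fun k =>
    if (z k).im = 0 then q.eval ((z k).re)
    else if 0 < (z k).im then (if q' (z k) = 0 then 0 else 1)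
    else (if q' (z k) = 0 then 0 else -1) with hνdef
  have hreal : ∀ k, (z k).im = 0 → z k = f ((z k).re) := by
    intro k hk
    apply Complex.ext <;> simp [hf, hk]
  -- Claim 1 : H = Pᵀ * diagonal ν * P
  have hHP : H = Pᵀ * Matrix.diagonal ν * P := by
    ext i j
    apply Complex.ofReal_injective
    have hentry : ((Pᵀ * Matrix.diagonal ν * P) i j : ℝ) = ∑ k, ν k * P k i * P k j := by
      rw [Matrix.mul_assoc, Matrix.mul_apply]
      refine Finset.sum_congr rfl fun k _ => ?_
      rw [Matrix.diagonal_mul, Matrix.transpose_apply]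
      ring
    rw [hentry]
    push_cast
    rw [hH i j]
    set L : Fin n → ℂ := fun k => ((ν k : ℂ) * (P k i : ℝ) * (P k j : ℝ)) with hLdef
    set F : Fin n → ℂ := fun k => z k ^ ((i : ℕ) + (j : ℕ)) * q' (z k) with hFdef
    show ∑ k, F k = ∑ k, L k
    have keyPos : ∀ k, 0 < (z k).im → L k + L (σ k) = F k + F (σ k) := by
      intro k hk
      have hkim : (z k).im ≠ 0 := ne_of_gt hk
      have hσim1 : (z (σ k)).im < 0 := by rw [hσim]; linarith
      have hσim2 : ¬ (z (σ k)).im = 0 := ne_of_lt hσim1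
      have hσim3 : ¬ 0 < (z (σ k)).im := not_lt.mpr (le_of_lt hσim1)
      have hLk : L k = ((if q' (z k) = 0 then (0:ℝ) else 1) : ℝ) *
          ((u k * z k ^ (i : ℕ)).re : ℝ) * ((u k * z k ^ (j : ℕ)).re : ℝ) := by
        simp only [hLdef, hPdef, hνdef, if_neg hkim, if_pos hk]
      have hLσ : L (σ k) = ((if q' (z k) = 0 then (0:ℝ) else -1) : ℝ) *
          ((u k * z k ^ (i : ℕ)).im : ℝ) * ((u k * z k ^ (j : ℕ)).im : ℝ) := by
        have hqσ : (q' (z (σ k)) = 0) = (q' (z k) = 0) := by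
          rw [hq'σ]
          simp
        simp only [hLdef, hPdef, hνdef, if_neg hσim2, if_neg hσim3, hσσ, hqσ]
      have hFσ : F (σ k) = (starRingEnd ℂ) (F k) := by
        simp only [hFdef]
        rw [hq'σ k, hσ k, ← _root_.map_pow, ← _root_.map_mul]
      by_cases hq0 : q' (z k) = 0
      · rw [hLk, hLσ, hFσ]
        simp only [hFdef, hq0, if_pos hq0, mul_zero, map_zero]
        norm_num
      · have hab : u k * z k ^ (i : ℕ) * (u k * z k ^ (j : ℕ)) = 2 * F k := by
          rw [hFdef]
          simp only []
          rw [pow_add]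
          rw [show u k * z k ^ (i:ℕ) * (u k * z k ^ (j:ℕ)) = u k ^ 2 * (z k ^ (i:ℕ) * z k ^ (j:ℕ)) by ring]
          rw [hu2 k hq0]
          ring
        have hmulre := Complex.mul_re (u k * z k ^ (i : ℕ)) (u k * z k ^ (j : ℕ))
        rw [hab] at hmulre
        have hr : 2 * (F k).re = (u k * z k ^ (i : ℕ)).re * (u k * z k ^ (j : ℕ)).re -
            (u k * z k ^ (i : ℕ)).im * (u k * z k ^ (j : ℕ)).im := by
          rw [← hmulre]; simp
        have he : ((2 * (F k).re : ℝ) : ℂ) = (((u k * z k ^ (i : ℕ)).re * (u k * z k ^ (j : ℕ)).re -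
            (u k * z k ^ (i : ℕ)).im * (u k * z k ^ (j : ℕ)).im : ℝ) : ℂ) := by
          exact_mod_cast congrArg (fun t : ℝ => (t : ℂ)) hr
        rw [hLk, hLσ, hFσ, if_neg hq0, if_neg hq0, Complex.add_conj]
        push_cast at he ⊢
        linear_combination -he
    have key : ∀ k, L k + L (σ k) = F k + F (σ k) := by
      intro k
      rcases lt_trichotomy ((z k).im) 0 with hneg | hzero | hpos
      · have := keyPos (σ k) (by rw [hσim]; linarith)
        rw [hσσ] at this
        linear_combination this
      · have hfix := hσfix k hzero
        rw [hfix]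
        have hLk : L k = F k := by
          have hzk := hreal k hzero
          set x : ℝ := (z k).re with hx
          have hzpow : ∀ m : ℕ, z k ^ m = f (x ^ m) := by
            intro m; rw [hzk, map_pow]
          have hq'x : q' (z k) = f (q.eval x) := by
            rw [hq', hzk]
            exact hevalR q x
          simp only [hLdef, hFdef, hPdef, hνdef, if_pos hzero, hq'x, hzpow, hf,
            Complex.coe_algebraMap, Complex.ofReal_re]
          rw [← hx]
          push_cast
          ring
        rw [hLk]
      · exact keyPos k hpos
    have hsum2 : ∑ k, (L k + L (σ k)) = ∑ k, (F k + F (σ k)) :=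
      Finset.sum_congr rfl fun k _ => key k
    have hperm : Function.Involutive σ := hσσ
    have hσsumL : ∑ k, L (σ k) = ∑ k, L k := Equiv.sum_comp hperm.toPerm L
    have hσsumF : ∑ k, F (σ k) = ∑ k, F k := Equiv.sum_comp hperm.toPerm F
    rw [Finset.sum_add_distrib, Finset.sum_add_distrib, hσsumL, hσsumF] at hsum2
    have h2 : (2:ℂ) * ∑ k, L k = 2 * ∑ k, F k := by linear_combination hsum2
    exact (mul_left_cancel₀ two_ne_zero h2).symm
  -- Claim 2 : P is invertible
  have hPcR : ∀ k, (z k).im = 0 → ∀ i : Fin n, (P.map f) k i = z k ^ (i : ℕ) := by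
    intro k hk i
    have h1 : z k ^ (i : ℕ) = (((z k).re ^ (i : ℕ) : ℝ) : ℂ) := by
      conv_lhs => rw [hreal k hk, hf, Complex.coe_algebraMap]
      push_cast
      ring
    have h2 : ((z k) ^ (i : ℕ)).re = (z k).re ^ (i : ℕ) := by
      rw [h1]
      simp [← Complex.ofReal_pow]
    rw [Matrix.map_apply]
    show f (P k i) = _
    rw [hPdef]
    simp only [if_pos hk]
    rw [h2, h1, hf, Complex.coe_algebraMap]
  have hPcPos : ∀ k, 0 < (z k).im → ∀ i : Fin n,
      (P.map f) k i = (((u k * z k ^ (i : ℕ)).re : ℝ) : ℂ) := by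
    intro k hk i
    rw [Matrix.map_apply]
    show f (P k i) = _
    rw [hPdef]
    simp only [if_neg (ne_of_gt hk), if_pos hk, hf, Complex.coe_algebraMap]
  have hPcNeg : ∀ k, (z k).im < 0 → ∀ i : Fin n,
      (P.map f) k i = (((u (σ k) * z (σ k) ^ (i : ℕ)).im : ℝ) : ℂ) := by
    intro k hk i
    rw [Matrix.map_apply]
    show f (P k i) = _
    rw [hPdef]
    simp only [if_neg (ne_of_lt hk), if_neg (not_lt.mpr (le_of_lt hk)), hf,
      Complex.coe_algebraMap]
  have hdetP : IsUnit P.det := by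
    set G : Matrix (Fin n) (Fin n) ℂ := fun k l =>
      if (z k).im = 0 then (if l = k then 1 else 0)
      else if 0 < (z k).im then
        (u k)⁻¹ * ((if l = k then 1 else 0) + Complex.I * (if l = σ k then 1 else 0))
      else ((starRingEnd ℂ) (u (σ k)))⁻¹ *
        ((if l = σ k then 1 else 0) - Complex.I * (if l = k then 1 else 0)) with hG
    have hVG : Matrix.vandermonde z = G * (P.map f) := by
      ext k i
      rw [Matrix.mul_apply, Matrix.vandermonde_apply]
      symm
      rcases lt_trichotomy ((z k).im) 0 with hneg | hzero | hpos
      · -- negative imaginary part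
        have hkim : (z k).im ≠ 0 := ne_of_lt hneg
        have hkim2 : ¬ 0 < (z k).im := not_lt.mpr (le_of_lt hneg)
        have hne : σ k ≠ k := hσne k hkim
        have hmpos : 0 < (z (σ k)).im := by rw [hσim]; linarith
        set c : ℂ := ((starRingEnd ℂ) (u (σ k)))⁻¹ with hc
        have expand : ∀ l, G k l * (P.map f) l i =
            (if l = σ k then c * (P.map f) l i else 0) +
            (if l = k then -(c * Complex.I) * (P.map f) l i else 0) := by
          intro l
          simp only [hG, if_neg hkim, if_neg hkim2]
          by_cases h1 : l = σ k
          · have h2 : l ≠ k := by rw [h1]; exact hne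
            rw [if_pos h1, if_pos h1, if_neg h2, if_neg h2]
            ring
          · rw [if_neg h1, if_neg h1]
            by_cases h2 : l = k
            · rw [if_pos h2, if_pos h2]
              ring
            · rw [if_neg h2, if_neg h2]
              ring
        rw [Finset.sum_congr rfl fun l _ => expand l, Finset.sum_add_distrib,
          Finset.sum_ite_eq' Finset.univ (σ k), Finset.sum_ite_eq' Finset.univ k]
        simp only [Finset.mem_univ, if_pos]
        rw [hPcPos (σ k) hmpos i, hPcNeg k hneg i]
        set b : ℂ := u (σ k) * z (σ k) ^ (i : ℕ) with hb
        have hconjb : ((b.re : ℝ) : ℂ) - Complex.I * ((b.im : ℝ) : ℂ) = (starRingEnd ℂ) b := by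
          apply Complex.ext <;> simp
        have : c * ((b.re : ℝ) : ℂ) + -(c * Complex.I) * ((b.im : ℝ) : ℂ) =
            c * (((b.re : ℝ) : ℂ) - Complex.I * ((b.im : ℝ) : ℂ)) := by ring
        rw [this, hconjb, hc, ← map_inv₀, ← _root_.map_mul]
        rw [hb, show (u (σ k))⁻¹ * (u (σ k) * z (σ k) ^ (i : ℕ)) = z (σ k) ^ (i : ℕ) from
          inv_mul_cancel_left₀ (hu0 (σ k)) _]
        rw [_root_.map_pow, ← hσ (σ k), hσσ]
      · -- real root
        have expand : ∀ l, G k l * (P.map f) l i =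
            (if l = k then (P.map f) k i else 0) := by
          intro l
          simp only [hG, if_pos hzero]
          by_cases h1 : l = k
          · rw [if_pos h1, if_pos h1, h1, one_mul]
          · rw [if_neg h1, if_neg h1, zero_mul]
        rw [Finset.sum_congr rfl fun l _ => expand l, Finset.sum_ite_eq' Finset.univ k]
        simp only [Finset.mem_univ, if_pos]
        exact hPcR k hzero i
      · -- positive imaginary part
        have hkim : (z k).im ≠ 0 := ne_of_gt hpos
        have hne : σ k ≠ k := hσne k hkim
        have hmneg : (z (σ k)).im < 0 := by rw [hσim]; linarith
        have expand : ∀ l, G k l * (P.map f) l i =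
            (if l = k then (u k)⁻¹ * (P.map f) l i else 0) +
            (if l = σ k then (u k)⁻¹ * Complex.I * (P.map f) l i else 0) := by
          intro l
          simp only [hG, if_neg hkim, if_pos hpos]
          by_cases h1 : l = k
          · have h2 : l ≠ σ k := by rw [h1]; exact fun h => hne h.symm
            rw [if_pos h1, if_pos h1, if_neg h2, if_neg h2]
            ring
          · rw [if_neg h1, if_neg h1]
            by_cases h2 : l = σ k
            · rw [if_pos h2, if_pos h2]
              ring
            · rw [if_neg h2, if_neg h2]
              ring
        rw [Finset.sum_congr rfl fun l _ => expand l, Finset.sum_add_distrib,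
          Finset.sum_ite_eq' Finset.univ k, Finset.sum_ite_eq' Finset.univ (σ k)]
        simp only [Finset.mem_univ, if_pos]
        rw [hPcPos k hpos i, hPcNeg (σ k) hmneg i, hσσ]
        set a : ℂ := u k * z k ^ (i : ℕ) with ha
        have : (u k)⁻¹ * ((a.re : ℝ) : ℂ) + (u k)⁻¹ * Complex.I * ((a.im : ℝ) : ℂ) =
            (u k)⁻¹ * (((a.re : ℝ) : ℂ) + ((a.im : ℝ) : ℂ) * Complex.I) := by ring
        rw [this, Complex.re_add_im, ha, inv_mul_cancel_left₀ (hu0 k)]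
    have hdetV : (Matrix.vandermonde z).det ≠ 0 :=
      Matrix.det_vandermonde_ne_zero_iff.mpr hinj
    have hdetPc : (P.map f).det ≠ 0 := by
      intro h0
      apply hdetV
      rw [hVG, Matrix.det_mul, h0, mul_zero]
    have hfd : f P.det = (P.map f).det := RingHom.map_det f P
    have : P.det ≠ 0 := by
      intro h0
      apply hdetPc
      rw [← hfd, h0, map_zero]
    exact isUnit_iff_ne_zero.mpr this
  -- use Sylvester's law of inertia
  rw [signature_eq_of_decomp H hsymm P hdetP ν hHP]
  -- counting
  set A : Finset (Fin n) := Finset.univ.filter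
    (fun k => (z k).im = 0 ∧ 0 < q.eval ((z k).re)) with hA
  set A' : Finset (Fin n) := Finset.univ.filter
    (fun k => (z k).im = 0 ∧ q.eval ((z k).re) < 0) with hA'
  set B : Finset (Fin n) := Finset.univ.filter
    (fun k => 0 < (z k).im ∧ q' (z k) ≠ 0) with hB
  set B' : Finset (Fin n) := Finset.univ.filter
    (fun k => (z k).im < 0 ∧ q' (z k) ≠ 0) with hB'
  have hposf : Finset.univ.filter (fun k => 0 < ν k) = A ∪ B := by
    ext k
    simp only [hA, hB, Finset.mem_filter, Finset.mem_union, Finset.mem_univ, true_and, hνdef]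
    rcases lt_trichotomy ((z k).im) 0 with hneg | hzero | hpos
    · rw [if_neg (ne_of_lt hneg), if_neg (not_lt.mpr (le_of_lt hneg))]
      constructor
      · intro h
        by_cases hq0 : q' (z k) = 0
        · rw [if_pos hq0] at h; norm_num at h
        · rw [if_neg hq0] at h; norm_num at h
      · rintro (⟨h1, -⟩ | ⟨h1, -⟩) <;> [exact absurd h1 (ne_of_lt hneg); linarith]
    · rw [if_pos hzero]
      constructor
      · intro h; exact Or.inl ⟨hzero, h⟩
      · rintro (⟨-, h2⟩ | ⟨h1, -⟩) <;> [exact h2; linarith]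
    · rw [if_neg (ne_of_gt hpos), if_pos hpos]
      constructor
      · intro h
        by_cases hq0 : q' (z k) = 0
        · rw [if_pos hq0] at h; norm_num at h
        · exact Or.inr ⟨hpos, hq0⟩
      · rintro (⟨h1, -⟩ | ⟨-, h2⟩)
        · exact absurd h1 (ne_of_gt hpos)
        · rw [if_neg h2]; norm_num
  have hnegf : Finset.univ.filter (fun k => ν k < 0) = A' ∪ B' := by
    ext k
    simp only [hA', hB', Finset.mem_filter, Finset.mem_union, Finset.mem_univ, true_and, hνdef]
    rcases lt_trichotomy ((z k).im) 0 with hneg | hzero | hpos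
    · rw [if_neg (ne_of_lt hneg), if_neg (not_lt.mpr (le_of_lt hneg))]
      constructor
      · intro h
        by_cases hq0 : q' (z k) = 0
        · rw [if_pos hq0] at h; norm_num at h
        · exact Or.inr ⟨hneg, hq0⟩
      · rintro (⟨h1, -⟩ | ⟨-, h2⟩)
        · exact absurd h1 (ne_of_lt hneg)
        · rw [if_neg h2]; norm_num
    · rw [if_pos hzero]
      constructor
      · intro h; exact Or.inl ⟨hzero, h⟩
      · rintro (⟨-, h2⟩ | ⟨h1, -⟩) <;> [exact h2; linarith]
    · rw [if_neg (ne_of_gt hpos), if_pos hpos]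
      constructor
      · intro h
        by_cases hq0 : q' (z k) = 0
        · rw [if_pos hq0] at h; norm_num at h
        · rw [if_neg hq0] at h; norm_num at h
      · rintro (⟨h1, -⟩ | ⟨h1, -⟩) <;> [exact absurd h1 (ne_of_gt hpos); linarith]
  have hABdisj : Disjoint A B := by
    rw [Finset.disjoint_left]
    intro k hk hk'
    rw [hA, Finset.mem_filter] at hk
    rw [hB, Finset.mem_filter] at hk'
    exact absurd hk.2.1 (ne_of_gt hk'.2.1)
  have hABdisj' : Disjoint A' B' := by
    rw [Finset.disjoint_left]
    intro k hk hk'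
    rw [hA', Finset.mem_filter] at hk
    rw [hB', Finset.mem_filter] at hk'
    exact absurd hk.2.1 (ne_of_lt hk'.2.1)
  have hBB' : B.card = B'.card := by
    apply Finset.card_bij (fun k _ => σ k)
    · intro k hk
      rw [hB, Finset.mem_filter] at hk
      rw [hB', Finset.mem_filter]
      refine ⟨Finset.mem_univ _, ?_, ?_⟩
      · rw [hσim]; linarith [hk.2.1]
      · rw [hq'σ]
        simpa using hk.2.2
    · intro k1 _ k2 _ h
      have := congrArg σ h
      rwa [hσσ, hσσ] at this
    · intro x hx
      rw [hB', Finset.mem_filter] at hx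
      refine ⟨σ x, ?_, (hσσ x)⟩
      rw [hB, Finset.mem_filter]
      refine ⟨Finset.mem_univ _, ?_, ?_⟩
      · rw [hσim]; linarith [hx.2.1]
      · rw [hq'σ]
        simpa using hx.2.2
  have hrootmem : ∀ x : ℝ, x ∈ p.roots.toFinset ↔ p.eval x = 0 := by
    intro x
    rw [Multiset.mem_toFinset, Polynomial.mem_roots hmonic.ne_zero]
    rfl
  have hevalzero : ∀ x : ℝ, p.eval x = 0 ↔ ∃ k, z k = f x := by
    intro x
    have h1 := hprodroot (f x)
    rw [hevalR] at h1
    rw [← h1]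
    constructor
    · intro h; rw [h, map_zero]
    · intro h
      have : f (p.eval x) = f 0 := by rw [h, map_zero]
      exact f.injective this
  have hAcard : A.card = (p.roots.toFinset.filter fun x => 0 < q.eval x).card := by
    apply Finset.card_bij (fun k _ => (z k).re)
    · intro k hk
      rw [hA, Finset.mem_filter] at hk
      rw [Finset.mem_filter, hrootmem]
      exact ⟨(hevalzero _).mpr ⟨k, hreal k hk.2.1⟩, hk.2.2⟩
    · intro k1 hk1 k2 hk2 h
      rw [hA, Finset.mem_filter] at hk1 hk2
      apply hinj
      apply Complex.ext
      · exact h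
      · rw [hk1.2.1, hk2.2.1]
    · intro x hx
      rw [Finset.mem_filter, hrootmem] at hx
      obtain ⟨k, hk⟩ := (hevalzero x).mp hx.1
      refine ⟨k, ?_, ?_⟩
      · rw [hA, Finset.mem_filter]
        have him : (z k).im = 0 := by rw [hk, hf, Complex.coe_algebraMap]; simp
        have hre : (z k).re = x := by rw [hk, hf, Complex.coe_algebraMap]; simp
        exact ⟨Finset.mem_univ _, him, by rw [hre]; exact hx.2⟩
      · rw [hk, hf, Complex.coe_algebraMap]; simp
  have hAcard' : A'.card = (p.roots.toFinset.filter fun x => q.eval x < 0).card := by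
    apply Finset.card_bij (fun k _ => (z k).re)
    · intro k hk
      rw [hA', Finset.mem_filter] at hk
      rw [Finset.mem_filter, hrootmem]
      exact ⟨(hevalzero _).mpr ⟨k, hreal k hk.2.1⟩, hk.2.2⟩
    · intro k1 hk1 k2 hk2 h
      rw [hA', Finset.mem_filter] at hk1 hk2
      apply hinj
      apply Complex.ext
      · exact h
      · rw [hk1.2.1, hk2.2.1]
    · intro x hx
      rw [Finset.mem_filter, hrootmem] at hx
      obtain ⟨k, hk⟩ := (hevalzero x).mp hx.1
      refine ⟨k, ?_, ?_⟩
      · rw [hA', Finset.mem_filter]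
        have him : (z k).im = 0 := by rw [hk, hf, Complex.coe_algebraMap]; simp
        have hre : (z k).re = x := by rw [hk, hf, Complex.coe_algebraMap]; simp
        exact ⟨Finset.mem_univ _, him, by rw [hre]; exact hx.2⟩
      · rw [hk, hf, Complex.coe_algebraMap]; simp
  rw [hposf, hnegf, Finset.card_union_of_disjoint hABdisj,
    Finset.card_union_of_disjoint hABdisj', hAcard, hAcard', hBB']
  push_cast
  ring
end

section
/- Let p be a monic squarefree real polynomial of degree n and let H_1 be the n×n matrix with entries H_1[i,j] = ∑_{k=1}^n z_k^{i+j-2}, where z_1,...,z_n are the distinct complex roots of p. Then the signature of H_1 equals the number of real roots of p. -/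
open Polynomial Matrix

namespace HermiteSig
open RealInnerProductSpace Complex
variable {n : ℕ}

noncomputable def proj (μ : Fin n → ℝ) (c : {i // 0 < μ i} → ℝ) : Fin n → ℝ :=
  fun j => if h : 0 < μ j then c ⟨j, h⟩ else 0

lemma posCount_le (A : Matrix (Fin n) (Fin n) ℝ) (μ ν : Fin n → ℝ)
    (φ ψ : (Fin n → ℝ) ≃ₗ[ℝ] (Fin n → ℝ))
    (hφ : ∀ x, x ⬝ᵥ (A *ᵥ x) = ∑ j, μ j * (φ x j)^2)
    (hψ : ∀ x, x ⬝ᵥ (A *ᵥ x) = ∑ j, ν j * (ψ x j)^2) :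
    (Finset.univ.filter fun i => 0 < μ i).card ≤
      (Finset.univ.filter fun i => 0 < ν i).card := by
  classical
  set L : ({i // 0 < μ i} → ℝ) →ₗ[ℝ] ({i // 0 < ν i} → ℝ) :=
    { toFun := fun c j => ψ (φ.symm (proj μ c)) j.1
      map_add' := by
        intro a b
        have : proj μ (a + b) = proj μ a + proj μ b := by
          funext i; by_cases h : 0 < μ i <;> simp [proj, h]
        funext j; simp [this]
      map_smul' := by
        intro r a
        have : proj μ (r • a) = r • proj μ a := by
          funext i; by_cases h : 0 < μ i <;> simp [proj, h]
        funext j; simp [this] } with hL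
  have hinj : Function.Injective L := by
    rw [← LinearMap.ker_eq_bot, LinearMap.ker_eq_bot']
    intro c hc
    set x := φ.symm (proj μ c) with hx
    have hφx : φ x = proj μ c := by simp [hx]
    have hQ1 : x ⬝ᵥ (A *ᵥ x) = ∑ j, μ j * (proj μ c j)^2 := by rw [hφ, hφx]
    have hterm : ∀ j : Fin n, 0 ≤ μ j * (proj μ c j)^2 := by
      intro j
      by_cases h : 0 < μ j
      · positivity
      · simp [proj, h]
    have hQ2 : x ⬝ᵥ (A *ᵥ x) ≤ 0 := by
      rw [hψ]
      apply Finset.sum_nonpos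
      intro j _
      by_cases h : 0 < ν j
      · have : ψ x j = 0 := congrFun hc ⟨j, h⟩
        simp [this]
      · exact mul_nonpos_of_nonpos_of_nonneg (le_of_not_gt h) (sq_nonneg _)
    have hQ0 : ∑ j, μ j * (proj μ c j)^2 = 0 :=
      le_antisymm (hQ1 ▸ hQ2) (Finset.sum_nonneg fun j _ => hterm j)
    funext i
    have := (Finset.sum_eq_zero_iff_of_nonneg (fun j _ => hterm j)).1 hQ0 i.1
      (Finset.mem_univ _)
    have hpi : proj μ c i.1 = c i := by simp [proj, i.2]
    have : proj μ c i.1 = 0 := by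
      rcases mul_eq_zero.1 this with h | h
      · exact absurd h (ne_of_gt i.2)
      · exact pow_eq_zero_iff (by norm_num) |>.1 h
    rw [hpi] at this
    simpa using this
  have := LinearMap.finrank_le_finrank_of_injective hinj
  simpa [Fintype.card_subtype] using this

lemma posCount_eq (A : Matrix (Fin n) (Fin n) ℝ) (μ ν : Fin n → ℝ)
    (φ ψ : (Fin n → ℝ) ≃ₗ[ℝ] (Fin n → ℝ))
    (hφ : ∀ x, x ⬝ᵥ (A *ᵥ x) = ∑ j, μ j * (φ x j)^2)
    (hψ : ∀ x, x ⬝ᵥ (A *ᵥ x) = ∑ j, ν j * (ψ x j)^2) :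
    (Finset.univ.filter fun i => 0 < μ i).card =
      (Finset.univ.filter fun i => 0 < ν i).card :=
  le_antisymm (posCount_le A μ ν φ ψ hφ hψ) (posCount_le A ν μ ψ φ hψ hφ)

lemma negCount_eq (A : Matrix (Fin n) (Fin n) ℝ) (μ ν : Fin n → ℝ)
    (φ ψ : (Fin n → ℝ) ≃ₗ[ℝ] (Fin n → ℝ))
    (hφ : ∀ x, x ⬝ᵥ (A *ᵥ x) = ∑ j, μ j * (φ x j)^2)
    (hψ : ∀ x, x ⬝ᵥ (A *ᵥ x) = ∑ j, ν j * (ψ x j)^2) :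
    (Finset.univ.filter fun i => μ i < 0).card =
      (Finset.univ.filter fun i => ν i < 0).card := by
  have hφ' : ∀ x, x ⬝ᵥ ((-A) *ᵥ x) = ∑ j, (-μ) j * (φ x j)^2 := by
    intro x; rw [Matrix.neg_mulVec, dotProduct_neg, hφ x, ← Finset.sum_neg_distrib]
    simp [neg_mul]
  have hψ' : ∀ x, x ⬝ᵥ ((-A) *ᵥ x) = ∑ j, (-ν) j * (ψ x j)^2 := by
    intro x; rw [Matrix.neg_mulVec, dotProduct_neg, hψ x, ← Finset.sum_neg_distrib]
    simp [neg_mul]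
  have := posCount_eq (-A) (-μ) (-ν) φ ψ hφ' hψ'
  simpa [neg_pos] using this

lemma quad_repr (A : Matrix (Fin n) (Fin n) ℝ) (hA : Aᵀ = A)
    (v : OrthonormalBasis (Fin n) ℝ (EuclideanSpace ℝ (Fin n))) (μ : Fin n → ℝ)
    (hv : ∀ i, A *ᵥ ⇑(v i) = μ i • ⇑(v i)) (x : EuclideanSpace ℝ (Fin n)) :
    (⇑x : Fin n → ℝ) ⬝ᵥ (A *ᵥ ⇑x) = ∑ j, μ j * (v.repr x j)^2 := by
  classical
  set y : EuclideanSpace ℝ (Fin n) := (WithLp.equiv 2 (Fin n → ℝ)).symm (A *ᵥ ⇑x) with hy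
  have h1 : (⇑x : Fin n → ℝ) ⬝ᵥ (A *ᵥ ⇑x) = ⟪x, y⟫ := by
    rw [PiLp.inner_apply]; simp [hy, dotProduct, RCLike.inner_apply, mul_comm]
  have h2 : ∀ j, v.repr y j = μ j * v.repr x j := by
    intro j
    rw [v.repr_apply_apply, v.repr_apply_apply]
    have h : (⟪v j, y⟫ : ℝ) = (⇑(v j) : Fin n → ℝ) ⬝ᵥ (A *ᵥ ⇑x) := by
      rw [PiLp.inner_apply]; simp [hy, dotProduct, RCLike.inner_apply, mul_comm]
    rw [h, Matrix.dotProduct_mulVec, ← Matrix.mulVec_transpose, hA, hv j]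
    have h' : (⟪v j, x⟫ : ℝ) = (⇑(v j) : Fin n → ℝ) ⬝ᵥ ⇑x := by
      rw [PiLp.inner_apply]; simp [hy, dotProduct, RCLike.inner_apply, mul_comm]
    rw [h']
    simp [smul_dotProduct]
  have h3 : (⟪x, y⟫ : ℝ) = ∑ j, v.repr x j * v.repr y j := by
    rw [← v.repr.inner_map_map x y, PiLp.inner_apply]
    simp [RCLike.inner_apply, mul_comm]
  rw [h1, h3]
  apply Finset.sum_congr rfl
  intro j _
  rw [h2 j]; ring

lemma exists_eigen_phi (A : Matrix (Fin n) (Fin n) ℝ) (hA : A.IsHermitian) :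
    ∃ φ : (Fin n → ℝ) ≃ₗ[ℝ] (Fin n → ℝ),
      ∀ x : Fin n → ℝ, x ⬝ᵥ (A *ᵥ x) = ∑ j, hA.eigenvalues j * (φ x j)^2 := by
  have hAT : Aᵀ = A := by
    ext i j
    have := congrFun (congrFun hA.eq i) j
    simpa using this
  refine ⟨(WithLp.linearEquiv 2 ℝ (Fin n → ℝ)).symm.trans
    (hA.eigenvectorBasis.repr.toLinearEquiv.trans (WithLp.linearEquiv 2 ℝ (Fin n → ℝ))), ?_⟩
  intro x
  have := quad_repr A hAT hA.eigenvectorBasis hA.eigenvalues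
    hA.mulVec_eigenvectorBasis ((WithLp.equiv 2 (Fin n → ℝ)).symm x)
  simpa [WithLp.linearEquiv] using this

lemma sum_pair (f g : Fin n → ℂ) (σ : Fin n → Fin n) (hb : Function.Bijective σ)
    (h : ∀ k, f k + f (σ k) = g k + g (σ k)) : ∑ k, f k = ∑ k, g k := by
  have h1 : ∑ k, (f k + f (σ k)) = ∑ k, (g k + g (σ k)) :=
    Finset.sum_congr rfl fun k _ => h k
  rw [Finset.sum_add_distrib, Finset.sum_add_distrib,
    Function.Bijective.sum_comp hb f, Function.Bijective.sum_comp hb g] at h1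
  apply mul_left_cancel₀ (two_ne_zero (α := ℂ))
  rw [two_mul, two_mul]; exact h1

lemma eval_conj (p : Polynomial ℝ) (w : ℂ) :
    (p.map (algebraMap ℝ ℂ)).eval ((starRingEnd ℂ) w)
      = (starRingEnd ℂ) ((p.map (algebraMap ℝ ℂ)).eval w) := by
  rw [Polynomial.eval_map, Polynomial.eval_map, Polynomial.hom_eval₂]
  congr 1
  ext r
  simp

end HermiteSig

/-- For a monic squarefree real polynomial `p` of degree `n` with
distinct complex roots `z`, the matrix `H₁` with entries `∑ₖ zₖ^(i+j)` has
signature equal to the number of real roots of `p`. -/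
theorem signature_H1_eq_card_real_roots (n : ℕ) (p : Polynomial ℝ)
    (hmonic : p.Monic) (hsf : Squarefree p) (hdeg : p.natDegree = n)
    (z : Fin n → ℂ) (hinj : Function.Injective z)
    (hroots : p.map (algebraMap ℝ ℂ) = ∏ i : Fin n, (X - C (z i)))
    (H : Matrix (Fin n) (Fin n) ℝ)
    (hH : ∀ i j : Fin n, (H i j : ℂ) = ∑ k : Fin n, z k ^ ((i : ℕ) + (j : ℕ))) :
    signature H = (p.roots.toFinset.card : ℤ) := by
  classical
  -- conjugation permutes the roots
  have hzroot : ∀ k, (p.map (algebraMap ℝ ℂ)).eval (z k) = 0 := by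
    intro k; rw [hroots, Polynomial.eval_prod]
    exact Finset.prod_eq_zero (Finset.mem_univ k) (by simp)
  have hconj : ∀ k, ∃ l, z l = (starRingEnd ℂ) (z k) := by
    intro k
    have h0 : (p.map (algebraMap ℝ ℂ)).eval ((starRingEnd ℂ) (z k)) = 0 := by
      rw [HermiteSig.eval_conj, hzroot, map_zero]
    rw [hroots, Polynomial.eval_prod] at h0
    obtain ⟨l, -, hl⟩ := Finset.prod_eq_zero_iff.1 h0
    refine ⟨l, ?_⟩
    simp only [Polynomial.eval_sub, Polynomial.eval_X, Polynomial.eval_C,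
      sub_eq_zero] at hl
    exact hl.symm
  choose σ hσ using hconj
  have hσσ : Function.Involutive σ := by
    intro k
    apply hinj
    rw [hσ, hσ k]
    simp
  have hσbij : Function.Bijective σ := hσσ.bijective
  have him : ∀ k, (z (σ k)).im = -(z k).im := fun k => by rw [hσ k]; simp
  have hσfix : ∀ k, (z k).im = 0 → σ k = k := by
    intro k h
    apply hinj
    rw [hσ k, Complex.conj_eq_iff_im.2 h]
  -- the congruence data
  set W : Matrix (Fin n) (Fin n) ℝ := fun k i =>
    if 0 < (z k).im then Real.sqrt 2 * (z k ^ (i : ℕ)).re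
    else if (z k).im < 0 then Real.sqrt 2 * (z k ^ (i : ℕ)).im
    else (z k ^ (i : ℕ)).re with hWdef
  set d : Fin n → ℝ := fun k => if (z k).im < 0 then -1 else 1 with hddef
  have hs2 : Real.sqrt 2 * Real.sqrt 2 = 2 := Real.mul_self_sqrt (by norm_num)
  have hpow : ∀ k (m : ℕ), z (σ k) ^ m = (starRingEnd ℂ) (z k ^ m) := by
    intro k m; rw [hσ k, ← map_pow]
  -- entrywise identity
  have hHW : ∀ i j : Fin n, H i j = ∑ k, d k * (W k i * W k j) := by
    intro i j
    apply Complex.ofReal_injective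
    rw [hH i j]
    push_cast
    refine (HermiteSig.sum_pair _ _ σ hσbij ?_).symm
    intro k
    have hC : (z k ^ ((i:ℕ) + (j:ℕ))).re
        = (z k ^ (i:ℕ)).re * (z k ^ (j:ℕ)).re - (z k ^ (i:ℕ)).im * (z k ^ (j:ℕ)).im := by
      rw [pow_add, Complex.mul_re]
    have hRHS : z k ^ ((i:ℕ) + (j:ℕ)) + z (σ k) ^ ((i:ℕ) + (j:ℕ))
        = 2 * ((z k ^ ((i:ℕ) + (j:ℕ))).re : ℂ) := by
      rw [hpow k, Complex.add_conj]
      push_cast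
      ring
    rw [hRHS]
    rcases lt_trichotomy ((z k).im) 0 with h | h | h
    · -- im < 0 : this root gets the imaginary part row, σ k the real part row
      have h1 : ¬ 0 < (z k).im := by linarith
      have h2 : 0 < (z (σ k)).im := by rw [him]; linarith
      have h3 : ¬ (z (σ k)).im < 0 := by linarith
      simp only [hWdef, hddef, if_pos h, if_pos h2, if_neg h1, if_neg h3]
      rw [hpow k (i:ℕ), hpow k (j:ℕ), Complex.conj_re, Complex.conj_re, hC]
      norm_cast
      push_cast
      linear_combination ((z k ^ (i:ℕ)).re * (z k ^ (j:ℕ)).re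
        - (z k ^ (i:ℕ)).im * (z k ^ (j:ℕ)).im) * hs2
    · -- im = 0
      have h1 : ¬ 0 < (z k).im := by rw [h]; norm_num
      have h2 : ¬ (z k).im < 0 := by rw [h]; norm_num
      have hfix := hσfix k h
      have hzim : (z k ^ (i:ℕ)).im = 0 ∧ (z k ^ (j:ℕ)).im = 0 := by
        have hz : (starRingEnd ℂ) (z k) = z k := Complex.conj_eq_iff_im.2 h
        constructor <;>
        · rw [← Complex.conj_eq_iff_im, map_pow, hz]
      simp only [hfix, hWdef, hddef, if_neg h1, if_neg h2]
      rw [hC, hzim.1, hzim.2]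
      push_cast
      ring
    · have h1 : ¬ (z k).im < 0 := by linarith
      have h2 : (z (σ k)).im < 0 := by rw [him]; linarith
      have h3 : ¬ 0 < (z (σ k)).im := by linarith
      simp only [hWdef, hddef, if_pos h, if_pos h2, if_neg h1, if_neg h3]
      rw [hpow k (i:ℕ), hpow k (j:ℕ), Complex.conj_im, Complex.conj_im, hC]
      norm_cast
      push_cast
      linear_combination ((z k ^ (i:ℕ)).re * (z k ^ (j:ℕ)).re
        - (z k ^ (i:ℕ)).im * (z k ^ (j:ℕ)).im) * hs2
  -- W is invertible (via the Vandermonde matrix)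
  have hWinj : Function.Injective (W.mulVecLin) := by
    rw [← LinearMap.ker_eq_bot, LinearMap.ker_eq_bot']
    intro x hx0
    have hrow : ∀ k, ∑ i, W k i * x i = 0 := by
      intro k
      have := congrFun hx0 k
      simpa [Matrix.mulVecLin_apply, Matrix.mulVec, dotProduct] using this
    set u : Fin n → ℂ := fun k => ∑ i : Fin n, z k ^ (i.val) * (x i : ℂ) with hu
    have hure : ∀ k, (u k).re = ∑ i : Fin n, (z k ^ (i.val)).re * x i := by
      intro k
      rw [hu, Complex.re_sum]
      exact Finset.sum_congr rfl fun i _ => by simp [Complex.mul_re]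
    have huim : ∀ k, (u k).im = ∑ i : Fin n, (z k ^ (i.val)).im * x i := by
      intro k
      rw [hu, Complex.im_sum]
      exact Finset.sum_congr rfl fun i _ => by simp [Complex.mul_im]
    have huconj : ∀ k, u (σ k) = (starRingEnd ℂ) (u k) := by
      intro k
      rw [hu, map_sum]
      exact Finset.sum_congr rfl fun i _ => by
        rw [_root_.map_mul, ← hpow k, Complex.conj_ofReal]
    have hsne : Real.sqrt 2 ≠ 0 := by positivity
    have hu0 : ∀ k, u k = 0 := by
      intro k
      rcases lt_trichotomy ((z k).im) 0 with h | h | h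
      · have h1 : ¬ 0 < (z k).im := by linarith
        have hrk := hrow k
        simp only [hWdef, if_neg h1, if_pos h] at hrk
        have him0 : (u k).im = 0 := by
          have h2 : Real.sqrt 2 * ((u k).im) = 0 := by
            rw [huim, Finset.mul_sum, ← hrk]
            exact Finset.sum_congr rfl fun i _ => by ring
          exact (mul_eq_zero.1 h2).resolve_left hsne
        have h2 : 0 < (z (σ k)).im := by rw [him]; linarith
        have hrk2 := hrow (σ k)
        simp only [hWdef, if_pos h2] at hrk2
        have hre0 : (u k).re = 0 := by
          have h3 : Real.sqrt 2 * ((u (σ k)).re) = 0 := by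
            rw [hure, Finset.mul_sum, ← hrk2]
            exact Finset.sum_congr rfl fun i _ => by ring
          have h4 : (u (σ k)).re = 0 := (mul_eq_zero.1 h3).resolve_left hsne
          rw [huconj] at h4
          simpa using h4
        exact Complex.ext hre0 him0
      · have h1 : ¬ 0 < (z k).im := by rw [h]; norm_num
        have h2 : ¬ (z k).im < 0 := by rw [h]; norm_num
        have hrk := hrow k
        simp only [hWdef, if_neg h1, if_neg h2] at hrk
        have hre0 : (u k).re = 0 := by rw [hure]; exact hrk
        have him0 : (u k).im = 0 := by
          have h3 := huconj k
          rw [hσfix k h] at h3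
          have h4 := congrArg Complex.im h3
          simp only [Complex.conj_im] at h4
          linarith
        exact Complex.ext hre0 him0
      · have h1 : ¬ (z k).im < 0 := by linarith
        have hrk := hrow k
        simp only [hWdef, if_pos h] at hrk
        have hre0 : (u k).re = 0 := by
          have h3 : Real.sqrt 2 * ((u k).re) = 0 := by
            rw [hure, Finset.mul_sum, ← hrk]
            exact Finset.sum_congr rfl fun i _ => by ring
          exact (mul_eq_zero.1 h3).resolve_left hsne
        have h2 : (z (σ k)).im < 0 := by rw [him]; linarith
        have h2' : ¬ 0 < (z (σ k)).im := by linarith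
        have hrk2 := hrow (σ k)
        simp only [hWdef, if_neg h2', if_pos h2] at hrk2
        have him0 : (u k).im = 0 := by
          have h3 : Real.sqrt 2 * ((u (σ k)).im) = 0 := by
            rw [huim, Finset.mul_sum, ← hrk2]
            exact Finset.sum_congr rfl fun i _ => by ring
          have h4 : (u (σ k)).im = 0 := (mul_eq_zero.1 h3).resolve_left hsne
          rw [huconj] at h4
          simp only [Complex.conj_im, neg_eq_zero] at h4
          exact h4
        exact Complex.ext hre0 him0
    have hVdet : IsUnit (Matrix.vandermonde z).det := by
      rw [Matrix.det_vandermonde]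
      rw [isUnit_iff_ne_zero]
      apply Finset.prod_ne_zero_iff.2
      intro i _
      apply Finset.prod_ne_zero_iff.2
      intro j hj
      exact sub_ne_zero.2 fun hzz => (Finset.mem_Ioi.1 hj).ne' (hinj hzz)
    have hV : Function.Injective ((Matrix.vandermonde z).mulVec) :=
      Matrix.mulVec_injective_iff_isUnit.2 ((Matrix.isUnit_iff_isUnit_det _).2 hVdet)
    have hux : (Matrix.vandermonde z).mulVec (fun i => (x i : ℂ)) = 0 := by
      funext k
      have hk : (Matrix.vandermonde z).mulVec (fun i => (x i : ℂ)) k = u k := by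
        simp [Matrix.mulVec, dotProduct, Matrix.vandermonde, hu]
      rw [hk, hu0 k]
      rfl
    have hx0' : (fun i => (x i : ℂ)) = 0 := by
      apply hV
      rw [hux, Matrix.mulVec_zero]
    funext i
    have := congrFun hx0' i
    simpa using this
  have hWbij : Function.Bijective (W.mulVecLin) :=
    ⟨hWinj, (LinearMap.injective_iff_surjective).1 hWinj⟩
  set φ : (Fin n → ℝ) ≃ₗ[ℝ] (Fin n → ℝ) := LinearEquiv.ofBijective _ hWbij with hφdef
  have hφapp : ∀ x k, φ x k = (W *ᵥ x) k := fun x k => rfl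
  -- H = Wᵀ * diagonal d * W
  have hHmat : H = Wᵀ * Matrix.diagonal d * W := by
    ext i j
    rw [hHW, Matrix.mul_apply]
    apply Finset.sum_congr rfl
    intro k _
    rw [Matrix.mul_diagonal, Matrix.transpose_apply]
    ring
  have hφ : ∀ x, x ⬝ᵥ (H *ᵥ x) = ∑ k, d k * (φ x k)^2 := by
    intro x
    have step1 : x ⬝ᵥ (H *ᵥ x) = (W *ᵥ x) ⬝ᵥ (Matrix.diagonal d *ᵥ (W *ᵥ x)) := by
      rw [hHmat, ← Matrix.mulVec_mulVec, ← Matrix.mulVec_mulVec,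
        Matrix.dotProduct_mulVec x, Matrix.vecMul_transpose]
    rw [step1]
    rw [dotProduct]
    apply Finset.sum_congr rfl
    intro k _
    rw [Matrix.mulVec_diagonal, hφapp]
    ring
  -- H is symmetric
  have hHsym : H.IsHermitian := by
    rw [Matrix.IsHermitian]
    ext i j
    rw [Matrix.conjTranspose_apply, star_trivial]
    apply Complex.ofReal_injective
    rw [hH j i, hH i j]
    exact Finset.sum_congr rfl fun k _ => by rw [add_comm (j : ℕ) (i : ℕ)]
  -- signature computation
  obtain ⟨ψ, hψ⟩ := HermiteSig.exists_eigen_phi H hHsym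
  have hpos := HermiteSig.posCount_eq H hHsym.eigenvalues d ψ φ hψ hφ
  have hneg := HermiteSig.negCount_eq H hHsym.eigenvalues d ψ φ hψ hφ
  unfold signature
  rw [dif_pos hHsym, hpos, hneg]
  -- counting
  have e1 : (Finset.univ.filter fun k => 0 < d k)
      = Finset.univ.filter fun k => ¬ (z k).im < 0 := by
    apply Finset.filter_congr
    intro k _
    by_cases h : (z k).im < 0 <;> simp [hddef, h]
  have e2 : (Finset.univ.filter fun k => d k < 0)
      = Finset.univ.filter fun k => (z k).im < 0 := by
    apply Finset.filter_congr
    intro k _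
    by_cases h : (z k).im < 0 <;> simp [hddef, h]
  have e3 : (Finset.univ.filter fun k => 0 < (z k).im).card
      = (Finset.univ.filter fun k => (z k).im < 0).card := by
    apply Finset.card_bij (fun k _ => σ k)
    · intro k hk
      simp only [Finset.mem_filter, Finset.mem_univ, true_and] at hk ⊢
      rw [him]; linarith
    · intro a ha b hb hab
      have := congrArg σ hab
      rwa [hσσ a, hσσ b] at this
    · intro b hb
      simp only [Finset.mem_filter, Finset.mem_univ, true_and] at hb
      refine ⟨σ b, ?_, hσσ b⟩
      simp only [Finset.mem_filter, Finset.mem_univ, true_and]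
      rw [him]; linarith
  have epred : (Finset.univ.filter fun k => ¬ (z k).im < 0)
      = Finset.univ.filter fun k => ((z k).im = 0 ∨ 0 < (z k).im) := by
    apply Finset.filter_congr
    intro k _
    constructor
    · intro h
      rcases eq_or_lt_of_le (not_lt.1 h) with h' | h'
      · exact Or.inl h'.symm
      · exact Or.inr h'
    · rintro (h | h)
      · rw [h]; norm_num
      · intro h'; linarith
  have hdisj : Disjoint (Finset.univ.filter fun k => (z k).im = 0)
      (Finset.univ.filter fun k => 0 < (z k).im) := by
    rw [Finset.disjoint_left]
    intro k hk1 hk2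
    simp only [Finset.mem_filter, Finset.mem_univ, true_and] at hk1 hk2
    linarith
  have e5 : (Finset.univ.filter fun k => (z k).im = 0).card = p.roots.toFinset.card := by
    apply Finset.card_bij (fun k _ => (z k).re)
    · intro k hk
      simp only [Finset.mem_filter, Finset.mem_univ, true_and] at hk
      rw [Multiset.mem_toFinset, Polynomial.mem_roots hmonic.ne_zero]
      have hzk : (((z k).re : ℂ)) = z k := by
        apply Complex.ext <;> simp [hk]
      have h0 : (p.map (algebraMap ℝ ℂ)).eval ((algebraMap ℝ ℂ) ((z k).re)) = 0 := by
        rw [show (algebraMap ℝ ℂ) ((z k).re) = (((z k).re : ℂ)) from rfl, hzk]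
        exact hzroot k
      rw [Polynomial.eval_map, Polynomial.eval₂_at_apply] at h0
      exact (map_eq_zero_iff _ (algebraMap ℝ ℂ).injective).1 h0
    · intro a ha b hb hab
      simp only [Finset.mem_filter, Finset.mem_univ, true_and] at ha hb
      apply hinj
      apply Complex.ext
      · exact hab
      · rw [ha, hb]
    · intro r hr
      rw [Multiset.mem_toFinset, Polynomial.mem_roots hmonic.ne_zero] at hr
      have h0 : (p.map (algebraMap ℝ ℂ)).eval ((r : ℂ)) = 0 := by
        rw [show ((r : ℂ)) = (algebraMap ℝ ℂ) r from rfl, Polynomial.eval_map,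
          Polynomial.eval₂_at_apply, show p.eval r = 0 from hr, map_zero]
      rw [hroots, Polynomial.eval_prod] at h0
      obtain ⟨k, -, hk⟩ := Finset.prod_eq_zero_iff.1 h0
      simp only [Polynomial.eval_sub, Polynomial.eval_X, Polynomial.eval_C,
        sub_eq_zero] at hk
      refine ⟨k, ?_, ?_⟩
      · simp only [Finset.mem_filter, Finset.mem_univ, true_and]
        rw [← hk]
        simp
      · rw [← hk]
        simp
  rw [e1, e2, epred, Finset.filter_or, Finset.card_union_of_disjoint hdisj, ← e5]
  push_cast
  rw [e3]
  ring
end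

section
/- Let p be a monic squarefree real polynomial of degree n with companion matrix M, and let q be any real polynomial. Then H_1 · q(M) = H_q, where H_1 and H_q are the Hermite matrices of p with auxiliary polynomials 1 and q respectively. That is, the algorithm computing H_q as the product of H_1 with q evaluated at the companion matrix is correct. -/
open Polynomial Matrix

/-- The companion matrix of a polynomial `p`: 1's on the subdiagonal and
`-p.coeff i` in the last column. -/
def companion (p : Polynomial ℝ) : Matrix (Fin p.natDegree) (Fin p.natDegree) ℝ :=
  fun i j => (if (i : ℕ) = (j : ℕ) + 1 then 1 else 0) +
    (if (j : ℕ) + 1 = p.natDegree then -p.coeff i else 0)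

/-- The Hermite matrix of `p` with respect to the auxiliary polynomial `q`,
defined via traces of multiplication maps: `H_q[i,j] = Tr(M_{q·x^{i+j}})`
where `M` is the companion matrix of `p` (indices starting at 0). -/
noncomputable def hermite (p q : Polynomial ℝ) :
    Matrix (Fin p.natDegree) (Fin p.natDegree) ℝ :=
  fun i j => Matrix.trace (Polynomial.aeval (companion p) (q * X ^ ((i : ℕ) + (j : ℕ))))

lemma sum_mulVec' {ι : Type*} {N : ℕ} (s : Finset ι) (A : ι → Matrix (Fin N) (Fin N) ℝ)
    (v : Fin N → ℝ) : (∑ i ∈ s, A i) *ᵥ v = ∑ i ∈ s, A i *ᵥ v := by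
  funext a
  simp only [Matrix.mulVec, dotProduct, Finset.sum_apply, Matrix.sum_apply,
    Finset.sum_mul]
  exact Finset.sum_comm

lemma companion_pow_single (p : Polynomial ℝ) (h0 : 0 < p.natDegree) (k : ℕ)
    (hk : k < p.natDegree) :
    (companion p) ^ k *ᵥ Pi.single (⟨0, h0⟩ : Fin p.natDegree) 1 = Pi.single ⟨k, hk⟩ 1 := by
  induction k with
  | zero => funext i; simp [Matrix.one_apply, Pi.single_apply]
  | succ k ih =>
    have hk' : k < p.natDegree := Nat.lt_of_succ_lt hk
    rw [pow_succ', ← Matrix.mulVec_mulVec, ih hk', Matrix.mulVec_single_one]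
    funext i
    have h2 : ((⟨k, hk'⟩ : Fin p.natDegree) : ℕ) + 1 ≠ p.natDegree := by
      simp; omega
    simp only [Matrix.col_apply, companion, if_neg h2, add_zero, mul_one, Pi.single_apply, Fin.ext_iff]

lemma aeval_companion_mulVec (p : Polynomial ℝ) (h0 : 0 < p.natDegree) (s : Polynomial ℝ)
    (hs : s.natDegree < p.natDegree) :
    (Polynomial.aeval (companion p) s) *ᵥ Pi.single (⟨0, h0⟩ : Fin p.natDegree) 1
      = fun k : Fin p.natDegree => s.coeff (k : ℕ) := by
  rw [aeval_eq_sum_range' hs, sum_mulVec']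
  funext a
  rw [Finset.sum_apply]
  have key : ∀ i ∈ Finset.range p.natDegree,
      ((s.coeff i • (companion p) ^ i) *ᵥ Pi.single (⟨0, h0⟩ : Fin p.natDegree) 1) a
        = if (a : ℕ) = i then s.coeff i else 0 := by
    intro i hi
    rw [Matrix.smul_mulVec,
      companion_pow_single p h0 i (Finset.mem_range.mp hi)]
    simp [Pi.single_apply, Fin.ext_iff]
  rw [Finset.sum_congr rfl key, Finset.sum_ite_eq (Finset.range p.natDegree) (a : ℕ)]
  simp [a.isLt]

lemma companion_pow_natDegree (p : Polynomial ℝ) (h0 : 0 < p.natDegree) :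
    (companion p) ^ p.natDegree *ᵥ Pi.single (⟨0, h0⟩ : Fin p.natDegree) 1
      = fun i : Fin p.natDegree => -p.coeff (i : ℕ) := by
  have h2 : p.natDegree - 1 < p.natDegree := by omega
  have hpow : (companion p) ^ p.natDegree
      = companion p * (companion p) ^ (p.natDegree - 1) := by
    rw [← pow_succ']
    congr 1
    omega
  rw [hpow, ← Matrix.mulVec_mulVec, companion_pow_single p h0 _ h2, Matrix.mulVec_single]
  funext i
  have hlast : ((⟨p.natDegree - 1, h2⟩ : Fin p.natDegree) : ℕ) + 1 = p.natDegree := by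
    simp; omega
  have hfst : (i : ℕ) ≠ ((⟨p.natDegree - 1, h2⟩ : Fin p.natDegree) : ℕ) + 1 := by
    have := i.isLt; simp; omega
  simp [companion, if_pos hlast, if_neg hfst]

lemma aeval_companion_self (p : Polynomial ℝ) (hmonic : p.Monic) :
    Polynomial.aeval (companion p) p = 0 := by
  rcases Nat.eq_zero_or_pos p.natDegree with h0 | h0
  · ext i; exact absurd i.isLt (by omega)
  have key : (Polynomial.aeval (companion p) p) *ᵥ Pi.single (⟨0, h0⟩ : Fin p.natDegree) 1
      = 0 := by
    rw [aeval_eq_sum_range, sum_mulVec', Finset.sum_range_succ]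
    funext a
    rw [Pi.add_apply, Finset.sum_apply]
    have h1 : ∀ i ∈ Finset.range p.natDegree,
        ((p.coeff i • (companion p) ^ i) *ᵥ Pi.single (⟨0, h0⟩ : Fin p.natDegree) 1) a
          = if (a : ℕ) = i then p.coeff i else 0 := by
      intro i hi
      rw [Matrix.smul_mulVec, companion_pow_single p h0 i (Finset.mem_range.mp hi)]
      simp [Pi.single_apply, Fin.ext_iff]
    rw [Finset.sum_congr rfl h1, Finset.sum_ite_eq (Finset.range p.natDegree) (a : ℕ),
      Matrix.smul_mulVec, companion_pow_natDegree p h0, hmonic.coeff_natDegree]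
    simp [a.isLt]
  have hcomm : ∀ j : ℕ, Polynomial.aeval (companion p) p * (companion p) ^ j
      = (companion p) ^ j * Polynomial.aeval (companion p) p := by
    intro j
    have hX : (companion p) ^ j = Polynomial.aeval (companion p) ((X : Polynomial ℝ) ^ j) := by simp
    rw [hX, ← _root_.map_mul, ← _root_.map_mul, mul_comm]
  ext i j
  have hj : (Polynomial.aeval (companion p) p) *ᵥ Pi.single j 1 = 0 := by
    have hje : (Pi.single j 1 : Fin p.natDegree → ℝ)
        = (companion p) ^ (j : ℕ) *ᵥ Pi.single (⟨0, h0⟩ : Fin p.natDegree) 1 := by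
      rw [companion_pow_single p h0 (j : ℕ) j.isLt]
    rw [hje, Matrix.mulVec_mulVec, hcomm, ← Matrix.mulVec_mulVec, key]
    simp
  have := congrFun hj i
  simpa [Matrix.mulVec_single] using this

lemma aeval_companion_modByMonic (p : Polynomial ℝ) (hmonic : p.Monic) (s : Polynomial ℝ) :
    Polynomial.aeval (companion p) (s %ₘ p) = Polynomial.aeval (companion p) s := by
  conv_rhs => rw [← Polynomial.modByMonic_add_div s p]
  rw [map_add, _root_.map_mul, aeval_companion_self p hmonic, zero_mul, add_zero]

lemma aeval_companion_entry (p : Polynomial ℝ) (hmonic : p.Monic) (h0 : 0 < p.natDegree)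
    (s : Polynomial ℝ) (k j : Fin p.natDegree) :
    Polynomial.aeval (companion p) s k j = (s * X ^ (j : ℕ) %ₘ p).coeff (k : ℕ) := by
  have hp1 : p ≠ 1 := by
    intro h; rw [h] at h0; simp at h0
  have hdeg : (s * X ^ (j : ℕ) %ₘ p).natDegree < p.natDegree :=
    Polynomial.natDegree_modByMonic_lt _ hmonic hp1
  have key : (Polynomial.aeval (companion p) s * (companion p) ^ (j : ℕ))
      *ᵥ Pi.single (⟨0, h0⟩ : Fin p.natDegree) 1
      = fun k : Fin p.natDegree => (s * X ^ (j : ℕ) %ₘ p).coeff (k : ℕ) := by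
    have hX : Polynomial.aeval (companion p) s * (companion p) ^ (j : ℕ)
        = Polynomial.aeval (companion p) (s * X ^ (j : ℕ)) := by
      rw [_root_.map_mul, map_pow, aeval_X]
    rw [hX, ← aeval_companion_modByMonic p hmonic, aeval_companion_mulVec p h0 _ hdeg]
  have := congrFun key k
  rw [← Matrix.mulVec_mulVec, companion_pow_single p h0 (j : ℕ) j.isLt,
    Matrix.mulVec_single] at this
  simpa using this

/-- algorithm correctness: For a monic squarefree real polynomial `p`
with distinct complex roots and any real polynomial `q`, we have
`H₁ · q(M) = H_q` where `M` is the companion matrix of `p`. -/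
theorem hermite_mul_qM (n : ℕ) (p q : Polynomial ℝ)
    (hmonic : p.Monic) (hsf : Squarefree p) (hdeg : p.natDegree = n)
    (z : Fin n → ℂ) (hinj : Function.Injective z)
    (hroots : p.map (algebraMap ℝ ℂ) = ∏ i : Fin n, (X - C (z i))) :
    hermite p 1 * (Polynomial.aeval (companion p) q) = hermite p q := by
  subst hdeg
  rcases Nat.eq_zero_or_pos p.natDegree with h0 | h0
  · ext i; exact absurd i.isLt (by omega)
  have hp1 : p ≠ 1 := by intro h; rw [h] at h0; simp at h0
  set M := companion p with hM
  ext i j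
  rw [Matrix.mul_apply]
  set r : Polynomial ℝ := q * X ^ (j : ℕ) %ₘ p with hr
  have hrdeg : r.natDegree < p.natDegree := Polynomial.natDegree_modByMonic_lt _ hmonic hp1
  have hentry : ∀ k : Fin p.natDegree, Polynomial.aeval M q k j = r.coeff (k : ℕ) :=
    fun k => aeval_companion_entry p hmonic h0 q k j
  have h1 : ∀ k : Fin p.natDegree, _root_.hermite p 1 i k
      = Matrix.trace (M ^ ((i : ℕ) + (k : ℕ))) := by
    intro k
    simp [_root_.hermite, hM]
  calc ∑ k, _root_.hermite p 1 i k * Polynomial.aeval M q k j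
      = ∑ k : Fin p.natDegree,
        Matrix.trace (r.coeff (k : ℕ) • (M ^ ((i : ℕ) + (k : ℕ)))) := by
        refine Finset.sum_congr rfl fun k _ => ?_
        rw [h1 k, hentry k, Matrix.trace_smul, smul_eq_mul, mul_comm]
    _ = Matrix.trace (∑ k : Fin p.natDegree, r.coeff (k : ℕ) • (M ^ ((i : ℕ) + (k : ℕ)))) := by
        rw [Matrix.trace_sum]
    _ = Matrix.trace (M ^ (i : ℕ) * ∑ k : Fin p.natDegree, r.coeff (k : ℕ) • M ^ (k : ℕ)) := by
        rw [Finset.mul_sum]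
        congr 1
        refine Finset.sum_congr rfl fun k _ => ?_
        rw [pow_add, mul_smul_comm]
    _ = Matrix.trace (M ^ (i : ℕ) * Polynomial.aeval M r) := by
        have hsum : (∑ k : Fin p.natDegree, r.coeff (k : ℕ) • M ^ (k : ℕ))
            = Polynomial.aeval M r := by
          rw [aeval_eq_sum_range' hrdeg]
          exact Fin.sum_univ_eq_sum_range (fun k => r.coeff k • M ^ k) p.natDegree
        rw [hsum]
    _ = Matrix.trace (Polynomial.aeval M (q * X ^ ((i : ℕ) + (j : ℕ)))) := by
        congr 1
        rw [hr, aeval_companion_modByMonic p hmonic]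
        have hXi : M ^ (i : ℕ) = Polynomial.aeval M ((X : Polynomial ℝ) ^ (i : ℕ)) := by simp
        rw [hXi, ← _root_.map_mul]
        congr 1
        ring
    _ = _root_.hermite p q i j := rfl
end

section
/- Let A be a real n×n matrix with squarefree characteristic polynomial p, and for row i set q_i(x) = (x − a_{ii})^2 − R_i^2 where R_i = ∑_{j≠i} |a_{ij}|. If σ(H_{q_i}(p)) = σ(H_1(p)), then A has no real eigenvalue λ with |λ − a_{ii}| ≤ R_i (i.e., no real eigenvalue in the i-th Gershgorin disk). -/
open Polynomial Matrix

section Aux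

variable {m : ℕ}

/-- The submodule of vectors supported on a finset of coordinates. -/
def coordSubmodule (s : Finset (Fin m)) : Submodule ℝ (Fin m → ℝ) where
  carrier := {x | ∀ j ∉ s, x j = 0}
  add_mem' hx hy j hj := by simp [hx j hj, hy j hj]
  zero_mem' j _ := rfl
  smul_mem' c x hx j hj := by simp [hx j hj]

lemma mem_coordSubmodule {s : Finset (Fin m)} {x : Fin m → ℝ} :
    x ∈ coordSubmodule s ↔ ∀ j ∉ s, x j = 0 := Iff.rfl

noncomputable def coordEquiv (s : Finset (Fin m)) :
    coordSubmodule s ≃ₗ[ℝ] (s → ℝ) where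
  toFun x := fun j => x.1 j.1
  map_add' x y := rfl
  map_smul' c x := rfl
  invFun y := ⟨fun j => if h : j ∈ s then y ⟨j, h⟩ else 0, fun j hj => by simp [hj]⟩
  left_inv x := by
    ext j
    by_cases h : j ∈ s
    · simp [h]
    · simp [h, (x.2 j h).symm]
  right_inv y := by ext j; simp [j.2]

lemma finrank_coordSubmodule (s : Finset (Fin m)) :
    Module.finrank ℝ (coordSubmodule s) = s.card := by
  rw [(coordEquiv s).finrank_eq]
  simp [Module.finrank_fintype_fun_eq_card]

lemma quadform_pos (d : Fin m → ℝ) {x : Fin m → ℝ}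
    (hx : x ∈ coordSubmodule (Finset.univ.filter fun i => 0 < d i)) (hx0 : x ≠ 0) :
    0 < x ⬝ᵥ (diagonal d) *ᵥ x := by
  have hxd : x ⬝ᵥ (diagonal d) *ᵥ x = ∑ i, d i * x i ^ 2 := by
    simp [dotProduct, mulVec_diagonal]
    ring_nf
    exact Finset.sum_congr rfl fun i _ => by ring
  rw [hxd]
  obtain ⟨i, hi⟩ : ∃ i, x i ≠ 0 := by
    by_contra h
    push_neg at h
    exact hx0 (funext h)
  have hdi : 0 < d i := by
    by_contra h
    exact hi (hx i (by simp [h]))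
  refine Finset.sum_pos' (fun j _ => ?_) ⟨i, Finset.mem_univ i, by positivity⟩
  by_cases hj : 0 < d j
  · positivity
  · rw [hx j (by simp [hj])]; simp

lemma quadform_nonpos (d : Fin m → ℝ) {x : Fin m → ℝ}
    (hx : x ∈ coordSubmodule (Finset.univ.filter fun i => ¬ 0 < d i)) :
    x ⬝ᵥ (diagonal d) *ᵥ x ≤ 0 := by
  have hxd : x ⬝ᵥ (diagonal d) *ᵥ x = ∑ i, d i * x i ^ 2 := by
    simp [dotProduct, mulVec_diagonal]
    exact Finset.sum_congr rfl fun i _ => by ring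
  rw [hxd]
  refine Finset.sum_nonpos fun i _ => ?_
  by_cases hi : 0 < d i
  · rw [hx i (by simp [hi])]; simp
  · push_neg at hi
    have : 0 ≤ x i ^ 2 := sq_nonneg _
    nlinarith

lemma posCount_le (d e : Fin m → ℝ) (N : Matrix (Fin m) (Fin m) ℝ) (hN : IsUnit N.det)
    (h : diagonal d = Nᵀ * diagonal e * N) :
    (Finset.univ.filter fun i => 0 < e i).card ≤ (Finset.univ.filter fun i => 0 < d i).card := by
  classical
  -- quadratic form transfer
  have hQ : ∀ x : Fin m → ℝ, x ⬝ᵥ (diagonal d) *ᵥ x = (N *ᵥ x) ⬝ᵥ (diagonal e) *ᵥ (N *ᵥ x) := by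
    intro x
    rw [h, ← mulVec_mulVec, ← mulVec_mulVec, dotProduct_mulVec x, vecMul_transpose]
  -- the linear equivalence given by N
  have hinv : Invertible N := N.invertibleOfIsUnitDet hN
  let E : (Fin m → ℝ) ≃ₗ[ℝ] (Fin m → ℝ) := N.toLinearEquiv' hinv
  have hE : ∀ x, E x = N *ᵥ x := fun x => rfl
  -- subspace on which Q_d is positive definite, of dimension (#pos e)
  let S : Submodule ℝ (Fin m → ℝ) :=
    (coordSubmodule (Finset.univ.filter fun i => 0 < e i)).comap (E : (Fin m → ℝ) →ₗ[ℝ] (Fin m → ℝ))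
  have hSrank : Module.finrank ℝ S = (Finset.univ.filter fun i => 0 < e i).card := by
    have h1 : S = Submodule.map (E.symm : (Fin m → ℝ) →ₗ[ℝ] (Fin m → ℝ))
        (coordSubmodule (Finset.univ.filter fun i => 0 < e i)) := by
      ext x
      simp [S, Submodule.mem_map_equiv, Submodule.mem_comap]
    rw [h1, LinearEquiv.finrank_map_eq, finrank_coordSubmodule]
  let T : Submodule ℝ (Fin m → ℝ) := coordSubmodule (Finset.univ.filter fun i => ¬ 0 < d i)
  have hdisj : S ⊓ T = ⊥ := by
    rw [Submodule.eq_bot_iff]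
    intro x ⟨hxS, hxT⟩
    by_contra hx0
    have h1 : 0 < x ⬝ᵥ (diagonal d) *ᵥ x := by
      rw [hQ]
      refine quadform_pos e hxS ?_
      intro hNx
      apply hx0
      have hEx : E x = 0 := by rw [hE]; exact hNx
      have := congrArg E.symm hEx
      simpa using this
    have h2 := quadform_nonpos d hxT
    linarith
  have hsum := Submodule.finrank_sup_add_finrank_inf_eq S T
  rw [hdisj, finrank_bot, add_zero] at hsum
  have hle : Module.finrank ℝ S + Module.finrank ℝ T ≤ m := by
    rw [← hsum]
    simpa [Module.finrank_fintype_fun_eq_card] using (S ⊔ T).finrank_le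
  rw [hSrank, finrank_coordSubmodule] at hle
  have hcard : (Finset.univ.filter fun i => 0 < d i).card
      + (Finset.univ.filter fun i => ¬ 0 < d i).card = m := by
    rw [Finset.card_filter_add_card_filter_not]
    simp
  omega

lemma posCount_eq (d e : Fin m → ℝ) (N : Matrix (Fin m) (Fin m) ℝ) (hN : IsUnit N.det)
    (h : diagonal d = Nᵀ * diagonal e * N) :
    (Finset.univ.filter fun i => 0 < d i).card = (Finset.univ.filter fun i => 0 < e i).card := by
  refine le_antisymm ?_ (posCount_le d e N hN h)
  refine posCount_le e d N⁻¹ (N.isUnit_nonsing_inv_det hN) ?_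
  have hNT : IsUnit Nᵀ.det := by rwa [det_transpose]
  rw [h, transpose_nonsing_inv]
  rw [show (Nᵀ)⁻¹ * (Nᵀ * diagonal e * N) * N⁻¹
      = ((Nᵀ)⁻¹ * Nᵀ) * diagonal e * (N * N⁻¹) by noncomm_ring]
  rw [nonsing_inv_mul _ hNT, mul_nonsing_inv _ hN, one_mul, mul_one]

lemma negCount_eq (d e : Fin m → ℝ) (N : Matrix (Fin m) (Fin m) ℝ) (hN : IsUnit N.det)
    (h : diagonal d = Nᵀ * diagonal e * N) :
    (Finset.univ.filter fun i => d i < 0).card = (Finset.univ.filter fun i => e i < 0).card := by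
  have h' : diagonal (-d) = Nᵀ * diagonal (-e) * N := by
    rw [show (-d) = (fun i => -d i) from rfl, ← diagonal_neg,
      show (-e) = (fun i => -e i) from rfl, ← diagonal_neg, h]
    noncomm_ring
  have := posCount_eq (-d) (-e) N hN h'
  simpa [neg_pos] using this

lemma signature_congruence (Δ : Fin m → ℝ) (W : Matrix (Fin m) (Fin m) ℝ) (hW : IsUnit W.det) :
    signature (Wᵀ * diagonal Δ * W) =
      ((Finset.univ.filter fun i => 0 < Δ i).card : ℤ) -
      ((Finset.univ.filter fun i => Δ i < 0).card : ℤ) := by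
  set H := Wᵀ * diagonal Δ * W with hHdef
  have hH : H.IsHermitian := by
    rw [Matrix.IsHermitian, conjTranspose_eq_transpose_of_trivial]
    simp [hHdef, transpose_mul, diagonal_transpose, mul_assoc]
  rw [signature, dif_pos hH]
  -- spectral theorem
  set U : Matrix (Fin m) (Fin m) ℝ := (Matrix.IsHermitian.eigenvectorUnitary hH : Matrix (Fin m) (Fin m) ℝ) with hUdef
  have hU1 : U * Uᵀ = 1 := by
    have := (Matrix.mem_unitaryGroup_iff).mp (Matrix.IsHermitian.eigenvectorUnitary hH).2
    rwa [star_eq_conjTranspose, conjTranspose_eq_transpose_of_trivial] at this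
  have hU2 : Uᵀ * U = 1 := by
    have := (Matrix.mem_unitaryGroup_iff').mp (Matrix.IsHermitian.eigenvectorUnitary hH).2
    rwa [star_eq_conjTranspose, conjTranspose_eq_transpose_of_trivial] at this
  have hspec : H = U * diagonal hH.eigenvalues * Uᵀ := by
    have := hH.spectral_theorem
    rwa [Unitary.conjStarAlgAut_apply, star_eq_conjTranspose, conjTranspose_eq_transpose_of_trivial,
      RCLike.ofReal_real_eq_id] at this
  have hUdet : IsUnit U.det := by
    apply IsUnit.of_mul_eq_one (a := U.det) Uᵀ.det
    rw [← det_mul, hU1, det_one]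
  have hN : IsUnit (W * U).det := by
    rw [det_mul]; exact hW.mul hUdet
  have hcong : diagonal hH.eigenvalues = (W * U)ᵀ * diagonal Δ * (W * U) := by
    have : (W * U)ᵀ * diagonal Δ * (W * U) = Uᵀ * (Wᵀ * diagonal Δ * W) * U := by
      rw [transpose_mul]; noncomm_ring
    rw [this]
    have h2 : Uᵀ * H * U = diagonal hH.eigenvalues := by
      conv_lhs => rw [hspec]
      rw [show Uᵀ * (U * diagonal hH.eigenvalues * Uᵀ) * U
          = (Uᵀ * U) * diagonal hH.eigenvalues * (Uᵀ * U) by noncomm_ring, hU2, one_mul, mul_one]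
    exact h2.symm
  rw [posCount_eq hH.eigenvalues Δ (W * U) hN hcong, negCount_eq hH.eigenvalues Δ (W * U) hN hcong]

/-- Conjugation by an invertible matrix as an `ℝ`-algebra homomorphism. -/
noncomputable def conjAlgHom {k : Type*} [Fintype k] [DecidableEq k]
    (V : Matrix k k ℂ) (hV : IsUnit V.det) : Matrix k k ℂ →ₐ[ℝ] Matrix k k ℂ where
  toFun X := V⁻¹ * X * V
  map_one' := by show V⁻¹ * 1 * V = 1; rw [mul_one, nonsing_inv_mul _ hV]
  map_mul' X Y := by
    rw [show V⁻¹ * X * V * (V⁻¹ * Y * V) = V⁻¹ * X * (V * V⁻¹) * Y * V by noncomm_ring,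
      mul_nonsing_inv _ hV]
    noncomm_ring
  map_zero' := by simp
  map_add' X Y := by noncomm_ring
  commutes' r := by
    show V⁻¹ * algebraMap ℝ (Matrix k k ℂ) r * V = algebraMap ℝ (Matrix k k ℂ) r
    rw [mul_assoc, Algebra.commutes r V, ← mul_assoc, nonsing_inv_mul _ hV, one_mul]

lemma trace_formula (p : Polynomial ℝ) (hp : p.Monic) (r : Fin p.natDegree → ℂ)
    (hr : ∀ k, eval (r k) (p.map (algebraMap ℝ ℂ)) = 0) (hinj : Function.Injective r)
    (g : Polynomial ℝ) :
    (algebraMap ℝ ℂ) (Matrix.trace (Polynomial.aeval (companion p) g)) =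
      ∑ k, eval (r k) (g.map (algebraMap ℝ ℂ)) := by
  classical
  set Mc : Matrix (Fin p.natDegree) (Fin p.natDegree) ℂ := (companion p).map (algebraMap ℝ ℂ) with hMc
  set V : Matrix (Fin p.natDegree) (Fin p.natDegree) ℂ := vandermonde r with hV
  have hdetV : IsUnit V.det := by
    rw [isUnit_iff_ne_zero, hV]
    exact (det_vandermonde_ne_zero_iff).mpr hinj
  have hVapp : ∀ k i : Fin p.natDegree, V k i = r k ^ (i : ℕ) := fun k i => rfl
  -- the eigen-equation V * Mc = diagonal r * V
  have hVM : V * Mc = diagonal r * V := by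
    ext k j
    rw [mul_apply, diagonal_mul]
    have hcoef : ∀ i : Fin p.natDegree, Mc i j
        = (if (i : ℕ) = (j : ℕ) + 1 then 1 else 0)
          + (if (j : ℕ) + 1 = p.natDegree then -(algebraMap ℝ ℂ (p.coeff i)) else 0) := by
      intro i
      simp only [hMc, map_apply, companion]
      push_cast
      split_ifs <;> simp
    have hsplit : ∑ i, V k i * Mc i j
        = (∑ i : Fin p.natDegree, V k i * (if (i : ℕ) = (j : ℕ) + 1 then 1 else 0))
          + (∑ i : Fin p.natDegree, V k i *
            (if (j : ℕ) + 1 = p.natDegree then -(algebraMap ℝ ℂ (p.coeff i)) else 0)) := by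
      rw [← Finset.sum_add_distrib]
      exact Finset.sum_congr rfl fun i _ => by rw [hcoef i]; ring
    rw [hsplit]
    have hroot : ∑ i : Fin p.natDegree, (algebraMap ℝ ℂ) (p.coeff i) * r k ^ (i : ℕ) = -(r k ^ p.natDegree) := by
      have he := hr k
      rw [eval_eq_sum_range] at he
      have hdeg : (p.map (algebraMap ℝ ℂ)).natDegree = p.natDegree := by rw [natDegree_map]
      rw [hdeg, Finset.sum_range_succ] at he
      have hlead : (p.map (algebraMap ℝ ℂ)).coeff p.natDegree = 1 := by
        rw [coeff_map, hp.coeff_natDegree]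
        simp
      rw [hlead, one_mul] at he
      have h3 : ∑ i ∈ Finset.range p.natDegree, (p.map (algebraMap ℝ ℂ)).coeff i * r k ^ i
          = -(r k ^ p.natDegree) := by linear_combination he
      rw [Fin.sum_univ_eq_sum_range (fun i => (algebraMap ℝ ℂ) (p.coeff i) * r k ^ i), ← h3]
      exact Finset.sum_congr rfl fun i _ => by rw [coeff_map]
    by_cases hj : (j : ℕ) + 1 = p.natDegree
    · have h1 : ∑ i : Fin p.natDegree, V k i * (if (i : ℕ) = (j : ℕ) + 1 then (1:ℂ) else 0) = 0 := by
        refine Finset.sum_eq_zero fun i _ => ?_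
        have hi : (i : ℕ) ≠ (j : ℕ) + 1 := by have := i.isLt; omega
        rw [if_neg hi, mul_zero]
      have h2 : ∑ i : Fin p.natDegree, V k i *
          (if (j : ℕ) + 1 = p.natDegree then -(algebraMap ℝ ℂ (p.coeff i)) else 0)
          = r k ^ p.natDegree := by
        simp only [if_pos hj]
        have : ∀ i : Fin p.natDegree, V k i * -(algebraMap ℝ ℂ (p.coeff i))
            = -((algebraMap ℝ ℂ (p.coeff i)) * r k ^ (i : ℕ)) := fun i => by
          rw [hVapp]; ring
        rw [Finset.sum_congr rfl fun i _ => this i, Finset.sum_neg_distrib, hroot, neg_neg]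
      rw [h1, h2, zero_add, hVapp, ← pow_succ', hj]
    · have hlt : (j : ℕ) + 1 < p.natDegree := by have := j.isLt; omega
      set i₀ : Fin p.natDegree := ⟨(j : ℕ) + 1, hlt⟩ with hi₀
      have h1 : ∑ i : Fin p.natDegree, V k i * (if (i : ℕ) = (j : ℕ) + 1 then (1:ℂ) else 0)
          = r k ^ ((j : ℕ) + 1) := by
        have : ∀ i : Fin p.natDegree, V k i * (if (i : ℕ) = (j : ℕ) + 1 then (1:ℂ) else 0)
            = if i = i₀ then r k ^ ((j : ℕ) + 1) else 0 := by
          intro i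
          by_cases h : i = i₀
          · subst h; rw [if_pos rfl, if_pos rfl, hVapp, mul_one]
          · rw [if_neg h, if_neg (fun hc => h (Fin.ext hc)), mul_zero]
        rw [Finset.sum_congr rfl fun i _ => this i, Finset.sum_ite_eq' Finset.univ i₀]
        simp
      have h2 : ∑ i : Fin p.natDegree, V k i *
          (if (j : ℕ) + 1 = p.natDegree then -(algebraMap ℝ ℂ (p.coeff i)) else 0) = 0 := by
        refine Finset.sum_eq_zero fun i _ => by rw [if_neg hj, mul_zero]
      rw [h1, h2, add_zero, hVapp, ← pow_succ']
  have hMcV : Mc = V⁻¹ * diagonal r * V := by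
    have h4 := congrArg (fun X => V⁻¹ * X) hVM
    simpa [← mul_assoc, nonsing_inv_mul _ hdetV] using h4
  -- now compute the trace
  have hco : ⇑(Algebra.ofId ℝ ℂ) = ⇑(algebraMap ℝ ℂ) := funext fun a => rfl
  have step1 : (algebraMap ℝ ℂ) (Matrix.trace (Polynomial.aeval (companion p) g))
      = Matrix.trace (Polynomial.aeval Mc g) := by
    have htr : (algebraMap ℝ ℂ) (Matrix.trace (Polynomial.aeval (companion p) g))
        = Matrix.trace ((Polynomial.aeval (companion p) g).map (algebraMap ℝ ℂ)) := by
      simp [Matrix.trace, Matrix.diag, map_sum, map_apply]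
    rw [htr]
    congr 1
    have h5 := aeval_algHom_apply ((Algebra.ofId ℝ ℂ).mapMatrix
      (m := Fin p.natDegree)) (companion p) g
    simp only [AlgHom.mapMatrix_apply, hco] at h5
    exact h5.symm
  rw [step1]
  have step2 : Polynomial.aeval Mc g
      = V⁻¹ * (diagonal fun k => Polynomial.aeval (r k) g) * V := by
    have h6 : Mc = conjAlgHom V hdetV (diagonal r) := hMcV
    rw [h6, aeval_algHom_apply (conjAlgHom V hdetV) (diagonal r) g]
    have h7 : Polynomial.aeval (diagonal r) g
        = diagonal fun k => Polynomial.aeval (r k) g := by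
      have h8 := aeval_algHom_apply
        (Matrix.diagonalAlgHom (n := Fin p.natDegree) ℝ (α := ℂ)) r g
      simp only [diagonalAlgHom_apply] at h8
      rw [h8]
      have h9 : ((Polynomial.aeval r) g) = fun k => Polynomial.aeval (r k) g :=
        funext fun k =>
          (aeval_algHom_apply (Pi.evalAlgHom ℝ (fun _ : Fin p.natDegree => ℂ) k) r g).symm
      rw [h9]
    rw [h7]
    rfl
  rw [step2, Matrix.trace_mul_cycle, mul_nonsing_inv _ hdetV, one_mul, trace_diagonal]
  exact Finset.sum_congr rfl fun k _ => by rw [aeval_def, ← eval_map]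

open ComplexConjugate in
lemma hermite_eq_congr_diagonal (p q : Polynomial ℝ) (hp : p.Monic)
    (r : Fin p.natDegree → ℂ) (hr : ∀ k, eval (r k) (p.map (algebraMap ℝ ℂ)) = 0)
    (hinj : Function.Injective r)
    (c : Fin p.natDegree → Fin p.natDegree) (hcc : ∀ k, c (c k) = k)
    (hrc : ∀ k, r (c k) = conj (r k))
    (hq0 : ∀ k, c k ≠ k → Polynomial.aeval (r k) q ≠ 0) :
    ∃ (W : Matrix (Fin p.natDegree) (Fin p.natDegree) ℝ) (Δ : Fin p.natDegree → ℝ),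
      IsUnit W.det ∧ hermite p q = Wᵀ * diagonal Δ * W ∧
      (∀ k, c k = k → Δ k = (Polynomial.aeval (r k) q).re) ∧
      (∀ k, c k ≠ k → k < c k → Δ k = 2) ∧
      (∀ k, c k ≠ k → c k < k → Δ k = -2) := by
  classical
  -- square roots of the values of q at the roots
  have hex : ∀ k, ∃ w : ℂ, w ^ 2 = Polynomial.aeval (r k) q :=
    fun k => IsAlgClosed.exists_pow_nat_eq _ zero_lt_two
  choose ω hω using hex
  have hω0 : ∀ k, c k ≠ k → ω k ≠ 0 := by
    intro k hk h0
    exact hq0 k hk (by rw [← hω k, h0]; ring)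
  -- real roots are genuinely real
  have hreal : ∀ k, c k = k → conj (r k) = r k := fun k hk => by
    rw [← hrc k, hk]
  have hqreal : ∀ k, c k = k → conj (Polynomial.aeval (r k) q) = Polynomial.aeval (r k) q := by
    intro k hk
    rw [← aeval_conj, hreal k hk]
  -- the real matrix
  set W : Matrix (Fin p.natDegree) (Fin p.natDegree) ℝ := fun k j =>
    if c k = k then ((r k) ^ (j : ℕ)).re
    else if k < c k then (ω k * (r k) ^ (j : ℕ)).re
    else (ω (c k) * (r (c k)) ^ (j : ℕ)).im with hW
  set Δ : Fin p.natDegree → ℝ := fun k =>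
    if c k = k then (Polynomial.aeval (r k) q).re
    else if k < c k then 2 else -2 with hΔ
  have key : ∀ z : ℂ, conj z = z → z = ((z.re : ℝ) : ℂ) := by
    intro z hz
    exact (Complex.conj_eq_iff_re.mp hz).symm
  refine ⟨W, Δ, ?_, ?_, ?_, ?_, ?_⟩
  · -- invertibility of W
    set Wc : Matrix (Fin p.natDegree) (Fin p.natDegree) ℂ := W.map (algebraMap ℝ ℂ) with hWc
    set P : Fin p.natDegree → ℂ := fun k =>
      if c k = k then 1 else if k < c k then (ω k)⁻¹ else -Complex.I * (conj (ω (c k)))⁻¹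
      with hP
    set Q : Fin p.natDegree → ℂ := fun k =>
      if c k = k then 0 else if k < c k then Complex.I * (ω k)⁻¹ else (conj (ω (c k)))⁻¹
      with hQ
    have hT : ∀ k j, vandermonde r k j = P k * Wc k j + Q k * Wc (c k) j := by
      intro k j
      rcases eq_or_ne (c k) k with hk | hk
      · simp only [hP, hQ, hW, hWc, map_apply, if_pos hk, hk]
        rw [one_mul, zero_mul, add_zero, vandermonde_apply]
        have : conj ((r k) ^ (j : ℕ)) = (r k) ^ (j : ℕ) := by
          rw [map_pow, hreal k hk]
        show _ = ((if c k = k then ((r k) ^ (j : ℕ)).re else if k < c k then (ω k * (r k) ^ (j : ℕ)).re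
          else (ω (c k) * (r (c k)) ^ (j : ℕ)).im : ℝ) : ℂ)
        rw [if_pos hk]
        exact key _ this
      · rcases lt_or_gt_of_ne (fun h : k = c k => hk h.symm) with hlt | hgt
        · have hck : ¬ c k = k := hk
          have h2 : c (c k) = k := hcc k
          have h3 : ¬ c (c k) = c k := by rw [h2]; exact fun h => hk h.symm
          have h4 : ¬ c k < c (c k) := by rw [h2]; omega
          have hWk : W k j = (ω k * (r k) ^ (j : ℕ)).re := by
            simp only [hW]; rw [if_neg hck, if_pos hlt]
          have hWck : W (c k) j = (ω k * (r k) ^ (j : ℕ)).im := by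
            simp only [hW]; rw [if_neg h3, if_neg h4, h2]
          simp only [hWc, map_apply, hWk, hWck, Complex.coe_algebraMap,
            vandermonde_apply, hP, hQ]
          rw [if_neg hck, if_pos hlt, if_neg hck, if_pos hlt]
          set A : ℂ := ω k * (r k) ^ (j : ℕ) with hA
          have hh : (ω k)⁻¹ * (A.re : ℂ) + Complex.I * (ω k)⁻¹ * (A.im : ℂ)
              = (ω k)⁻¹ * ((A.re : ℂ) + (A.im : ℂ) * Complex.I) := by ring
          rw [hh, Complex.re_add_im, hA, ← mul_assoc, inv_mul_cancel₀ (hω0 k hk), one_mul]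
        · have hck : ¬ c k = k := hk
          have hnlt : ¬ k < c k := by omega
          have h2 : c (c k) = k := hcc k
          have h3 : ¬ c (c k) = c k := by rw [h2]; exact fun h => hk h.symm
          have h4 : c k < c (c k) := by rw [h2]; omega
          have hWk : W k j = (ω (c k) * (r (c k)) ^ (j : ℕ)).im := by
            simp only [hW]; rw [if_neg hck, if_neg hnlt]
          have hWck : W (c k) j = (ω (c k) * (r (c k)) ^ (j : ℕ)).re := by
            simp only [hW]; rw [if_neg h3, if_pos h4]
          simp only [hWc, map_apply, hWk, hWck, Complex.coe_algebraMap,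
            vandermonde_apply, hP, hQ]
          rw [if_neg hck, if_neg hnlt, if_neg hck, if_neg hnlt]
          set A : ℂ := ω (c k) * (r (c k)) ^ (j : ℕ) with hA
          have hrk : r k = conj (r (c k)) := by rw [← hrc (c k), h2]
          have hω0' : ω (c k) ≠ 0 := hω0 (c k) h3
          have hstep : -Complex.I * (conj (ω (c k)))⁻¹ * (A.im : ℂ)
              + (conj (ω (c k)))⁻¹ * (A.re : ℂ)
              = (conj (ω (c k)))⁻¹ * ((A.re : ℂ) - (A.im : ℂ) * Complex.I) := by ring
          rw [hstep]
          have hconjA : (A.re : ℂ) - (A.im : ℂ) * Complex.I = conj A := by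
            simp [Complex.ext_iff]
          rw [hconjA, hA, _root_.map_mul, ← mul_assoc, inv_mul_cancel₀ (by
            simpa using hω0'), one_mul, map_pow, ← hrk]
    -- V = T * Wc
    set T : Matrix (Fin p.natDegree) (Fin p.natDegree) ℂ := fun k l =>
      P k * (if l = k then 1 else 0) + Q k * (if l = c k then 1 else 0) with hTdef
    have hVT : vandermonde r = T * Wc := by
      ext k j
      rw [mul_apply]
      have : ∀ l, T k l * Wc l j
          = P k * (if l = k then Wc l j else 0) + Q k * (if l = c k then Wc l j else 0) := by
        intro l
        simp only [hTdef]
        split_ifs <;> ring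
      rw [Finset.sum_congr rfl fun l _ => this l, Finset.sum_add_distrib]
      rw [← Finset.mul_sum, ← Finset.mul_sum, Finset.sum_ite_eq' Finset.univ k,
        Finset.sum_ite_eq' Finset.univ (c k)]
      simp only [Finset.mem_univ, if_pos]
      exact hT k j
    have hdetV : (vandermonde r).det ≠ 0 := (det_vandermonde_ne_zero_iff).mpr hinj
    have hdetWc : Wc.det ≠ 0 := by
      intro h0
      rw [hVT, det_mul, h0, mul_zero] at hdetV
      exact hdetV rfl
    have : (algebraMap ℝ ℂ) W.det ≠ 0 := by
      rwa [RingHom.map_det]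
    rw [isUnit_iff_ne_zero]
    intro h0
    exact this (by rw [h0, map_zero])
  · -- the congruence identity
    ext i j
    have hinjC : Function.Injective (algebraMap ℝ ℂ) := (algebraMap ℝ ℂ).injective
    apply hinjC
    rw [show hermite p q i j
        = Matrix.trace (Polynomial.aeval (companion p) (q * X ^ ((i : ℕ) + (j : ℕ)))) from rfl,
      trace_formula p hp r hr hinj]
    -- RHS entry
    have hRHS : (Wᵀ * diagonal Δ * W) i j = ∑ k, W k i * (Δ k * W k j) := by
      rw [mul_assoc, mul_apply]
      refine Finset.sum_congr rfl fun k _ => ?_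
      rw [transpose_apply, diagonal_mul]
    rw [hRHS, map_sum]
    -- pointwise values
    set t : Fin p.natDegree → ℂ := fun k =>
      eval (r k) ((q * X ^ ((i : ℕ) + (j : ℕ))).map (algebraMap ℝ ℂ)) with ht
    set s : Fin p.natDegree → ℂ := fun k => (algebraMap ℝ ℂ) (W k i * (Δ k * W k j)) with hs
    have htval : ∀ k, t k = Polynomial.aeval (r k) q * (r k) ^ (i : ℕ) * (r k) ^ (j : ℕ) := by
      intro k
      simp only [ht, Polynomial.map_mul, Polynomial.map_pow, map_X, eval_mul, eval_pow, eval_X]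
      rw [pow_add]
      rw [show Polynomial.aeval (r k) q = eval (r k) (q.map (algebraMap ℝ ℂ)) by
        rw [aeval_def, eval_map]]
      ring
    -- the involution identity
    have hpair : ∀ k, t k + t (c k) = s k + s (c k) := by
      intro k
      rcases eq_or_ne (c k) k with hk | hk
      · -- real root: t k = s k
        have : t k = s k := by
          rw [htval k]
          have hWki : W k i = ((r k) ^ (i : ℕ)).re := by simp only [hW]; rw [if_pos hk]
          have hWkj : W k j = ((r k) ^ (j : ℕ)).re := by simp only [hW]; rw [if_pos hk]
          have hΔk : Δ k = (Polynomial.aeval (r k) q).re := by simp only [hΔ]; rw [if_pos hk]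
          rw [hs]
          simp only [hWki, hWkj, hΔk]
          have h2 := key _ (hqreal k hk)
          have h3 : conj ((r k) ^ (i : ℕ)) = (r k) ^ (i : ℕ) := by rw [map_pow, hreal k hk]
          have h4 : conj ((r k) ^ (j : ℕ)) = (r k) ^ (j : ℕ) := by rw [map_pow, hreal k hk]
          rw [key _ h3, key _ h4, h2, Complex.coe_algebraMap]
          push_cast
          simp only [Complex.ofReal_re]
          ring
        rw [hk, this]
      · -- complex pair
        have hsymm : ∀ m, c m ≠ m → m < c m → t m + t (c m) = s m + s (c m) := by
          intro m hm hlt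
          have h2 : c (c m) = m := hcc m
          have h3 : ¬ c (c m) = c m := by rw [h2]; exact fun h => hm h.symm
          have h4 : ¬ c m < c (c m) := by rw [h2]; omega
          set z := r m with hz
          set A : ℂ := ω m * z ^ (i : ℕ) with hA
          set B : ℂ := ω m * z ^ (j : ℕ) with hB
          have htm : t m = A * B := by
            rw [htval m, ← hω m]
            simp only [hA, hB]
            ring
          have htcm : t (c m) = conj (A * B) := by
            rw [htval (c m), hrc m]
            rw [show Polynomial.aeval (conj z) q = conj (Polynomial.aeval z q) from aeval_conj q z]
            rw [← hω m, _root_.map_mul, ← map_pow, ← map_pow, hA, hB]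
            push_cast
            rw [_root_.map_mul, _root_.map_mul, map_pow]
            ring
          have hWmi : W m i = A.re := by simp only [hW]; rw [if_neg hm, if_pos hlt]
          have hWmj : W m j = B.re := by simp only [hW]; rw [if_neg hm, if_pos hlt]
          have hWcmi : W (c m) i = A.im := by simp only [hW]; rw [if_neg h3, if_neg h4, h2]
          have hWcmj : W (c m) j = B.im := by simp only [hW]; rw [if_neg h3, if_neg h4, h2]
          have hΔm : Δ m = 2 := by simp only [hΔ]; rw [if_neg hm, if_pos hlt]
          have hΔcm : Δ (c m) = -2 := by simp only [hΔ]; rw [if_neg h3, if_neg h4]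
          have hsm : s m = ((A.re * (2 * B.re) : ℝ) : ℂ) := by
            rw [hs]; simp only [hWmi, hWmj, hΔm, Complex.coe_algebraMap]
          have hscm : s (c m) = ((A.im * (-2 * B.im) : ℝ) : ℂ) := by
            rw [hs]; simp only [hWcmi, hWcmj, hΔcm, Complex.coe_algebraMap]
          rw [htm, htcm, hsm, hscm, Complex.add_conj]
          rw [Complex.mul_re]
          push_cast
          ring
        rcases lt_or_gt_of_ne (fun h : k = c k => hk h.symm) with hlt | hgt
        · exact hsymm k hk hlt
        · have h2 : c (c k) = k := hcc k
          have h3 : c (c k) ≠ c k := by rw [h2]; exact fun h => hk h.symm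
          have h4 : c k < c (c k) := by rw [h2]; omega
          have := hsymm (c k) h3 h4
          rw [h2] at this
          linear_combination this
    -- sum over the involution
    have hsum : ∑ k, (t k - s k) = 0 := by
      have hperm : ∑ k, (t k - s k) = ∑ k, (t (c k) - s (c k)) := by
        exact (Equiv.sum_comp (Function.Involutive.toPerm c hcc) (fun k => t k - s k)).symm
      have hneg : ∀ k, t (c k) - s (c k) = -(t k - s k) := by
        intro k
        have := hpair k
        linear_combination this
      rw [Finset.sum_congr rfl fun k _ => hneg k, Finset.sum_neg_distrib] at hperm
      have : (2 : ℂ) * ∑ k, (t k - s k) = 0 := by linear_combination hperm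
      simpa using this
    have := Finset.sum_sub_distrib (f := t) (g := s) ▸ hsum
    rw [sub_eq_zero] at this
    exact this
  · intro k hk; simp only [hΔ, if_pos hk]
  · intro k hk hlt; simp only [hΔ, if_neg hk, if_pos hlt]
  · intro k hk hlt
    have : ¬ k < c k := by omega
    simp only [hΔ, if_neg hk, if_neg this]

end Aux

set_option maxHeartbeats 1000000 in
open ComplexConjugate in
/-- for a real matrix `A` with squarefree characteristic polynomial `p`,
if the signatures of `H_{q_i}(p)` and `H_1(p)` coincide for
`q_i(x) = (x - a_ii)² - R_i²`, then `A` has no real eigenvalue (real root of `p`)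
in the `i`-th Gershgorin disk. -/
theorem no_real_eigenvalue_in_disk (n : ℕ) (A : Matrix (Fin n) (Fin n) ℝ)
    (hsf : Squarefree A.charpoly) (i : Fin n)
    (R : ℝ) (hR : R = ∑ j ∈ Finset.univ.erase i, |A i j|)
    (q : Polynomial ℝ) (hq : q = (X - C (A i i)) ^ 2 - C (R ^ 2))
    (hsig : signature (hermite A.charpoly q) = signature (hermite A.charpoly 1)) :
    ∀ x : ℝ, A.charpoly.IsRoot x → ¬ |x - A i i| ≤ R := by
  classical
  set p : Polynomial ℝ := A.charpoly with hpdef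
  have hp : p.Monic := A.charpoly_monic
  have hp0 : p ≠ 0 := hp.ne_zero
  set pc : Polynomial ℂ := p.map (algebraMap ℝ ℂ) with hpc
  have hpc0 : pc ≠ 0 := by
    simp only [hpc]
    exact (Polynomial.map_ne_zero_iff (algebraMap ℝ ℂ).injective).mpr hp0
  -- roots of pc
  have hsep : p.Separable := (PerfectField.separable_iff_squarefree).mpr hsf
  have hsepc : pc.Separable := hsep.map
  have hnodup : pc.roots.Nodup := nodup_roots hsepc
  have hsplits : pc.Splits := by
    rw [hpc]
    exact IsAlgClosed.splits _
  have hcard : pc.roots.card = p.natDegree := by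
    rw [(splits_iff_card_roots).mp hsplits, hpc, natDegree_map]
  -- enumeration of the roots
  set L : List ℂ := pc.roots.toList with hL
  have hlen : L.length = p.natDegree := by
    rw [hL, Multiset.length_toList, hcard]
  have hLnodup : L.Nodup := by
    rw [hL]
    rw [← Multiset.coe_nodup, Multiset.coe_toList]
    exact hnodup
  set r : Fin p.natDegree → ℂ := fun k => L.get (Fin.cast hlen.symm k) with hrdef
  have hinj : Function.Injective r := by
    intro a b hab
    have := (List.nodup_iff_injective_get).mp hLnodup hab
    exact Fin.ext (by simpa [Fin.ext_iff] using this)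
  have hmem : ∀ k, r k ∈ pc.roots := by
    intro k
    rw [← Multiset.mem_toList, ← hL]
    exact L.get_mem _
  have hr : ∀ k, eval (r k) pc = 0 := by
    intro k
    exact (mem_roots hpc0).mp (hmem k)
  have hsurj : ∀ z ∈ pc.roots, ∃ k, r k = z := by
    intro z hz
    rw [← Multiset.mem_toList, ← hL] at hz
    obtain ⟨idx, hidx⟩ := List.mem_iff_get.mp hz
    refine ⟨Fin.cast hlen idx, ?_⟩
    have hcast : Fin.cast hlen.symm (Fin.cast hlen idx) = idx := by ext; simp
    simp only [hrdef]
    rw [hcast]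
    exact hidx
  -- the conjugation involution
  have hconjroot : ∀ k, conj (r k) ∈ pc.roots := by
    intro k
    rw [mem_roots hpc0]
    have h1 : Polynomial.aeval (conj (r k)) p = conj (Polynomial.aeval (r k) p) := aeval_conj p _
    have h2 : ∀ z : ℂ, Polynomial.aeval z p = eval z pc := by
      intro z
      rw [aeval_def, hpc, eval_map]
    rw [Polynomial.IsRoot, ← h2, h1, h2, hr k, map_zero]
  have hc : ∀ k, ∃ l, r l = conj (r k) := fun k => hsurj _ (hconjroot k)
  choose c hrc' using hc
  have hrc : ∀ k, r (c k) = conj (r k) := hrc'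
  have hcc : ∀ k, c (c k) = k := by
    intro k
    apply hinj
    rw [hrc, hrc]
    simp
  -- q does not vanish at nonreal roots
  have hq0 : ∀ k, c k ≠ k → Polynomial.aeval (r k) q ≠ 0 := by
    intro k hk h0
    have him : conj (r k) ≠ r k := by
      intro h
      exact hk (hinj (by rw [hrc k, h]))
    set z := r k with hz
    have haeval : Polynomial.aeval z q
        = (z - (A i i : ℂ)) ^ 2 - ((R : ℂ)) ^ 2 := by
      rw [hq]
      simp only [map_sub, map_pow, aeval_X, aeval_C, Complex.coe_algebraMap]
    rw [haeval] at h0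
    have hfact : (z - (A i i : ℂ) - R) * (z - (A i i : ℂ) + R) = 0 := by
      linear_combination h0
    have hzre : z.im = 0 := by
      rcases mul_eq_zero.mp hfact with h | h
      · have : z = ((A i i + R : ℝ) : ℂ) := by
          push_cast
          linear_combination h
        rw [this]
        simp
      · have : z = ((A i i - R : ℝ) : ℂ) := by
          push_cast
          linear_combination h
        rw [this]
        simp
    exact him (by rw [Complex.conj_eq_iff_im]; exact hzre)
  have hone0 : ∀ k, c k ≠ k → Polynomial.aeval (r k) (1 : Polynomial ℝ) ≠ 0 := by
    intro k _
    simp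
  -- decompositions
  obtain ⟨W, Δ, hWdet, hH, hΔreal, hΔlt, hΔgt⟩ :=
    hermite_eq_congr_diagonal p q hp r hr hinj c hcc hrc hq0
  obtain ⟨W1, Δ1, hW1det, hH1, hΔ1real, hΔ1lt, hΔ1gt⟩ :=
    hermite_eq_congr_diagonal p 1 hp r hr hinj c hcc hrc hone0
  rw [hH, hH1, signature_congruence Δ W hWdet, signature_congruence Δ1 W1 hW1det] at hsig
  -- counting
  set Sreal := Finset.univ.filter (fun k => c k = k) with hSreal
  set P1 := Finset.univ.filter (fun k : Fin p.natDegree => c k ≠ k ∧ k < c k) with hP1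
  set P2 := Finset.univ.filter (fun k : Fin p.natDegree => c k ≠ k ∧ c k < k) with hP2
  have hP12 : P1.card = P2.card := by
    refine Finset.card_bij (fun k _ => c k) ?_ ?_ ?_
    · intro k hk
      simp only [hP1, Finset.mem_filter, Finset.mem_univ, true_and] at hk
      simp only [hP2, Finset.mem_filter, Finset.mem_univ, true_and, hcc k]
      exact ⟨fun h => hk.1 h.symm, hk.2⟩
    · intro a ha b hb hab
      have := congrArg c hab
      rwa [hcc, hcc] at this
    · intro l hl
      simp only [hP2, Finset.mem_filter, Finset.mem_univ, true_and] at hl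
      refine ⟨c l, ?_, hcc l⟩
      simp only [hP1, Finset.mem_filter, Finset.mem_univ, true_and, hcc l]
      exact ⟨fun h => hl.1 h.symm, hl.2⟩
  -- split the positive/negative counts
  have hsplit : ∀ (Δ' : Fin p.natDegree → ℝ) (q' : Polynomial ℝ),
      (∀ k, c k = k → Δ' k = (Polynomial.aeval (r k) q').re) →
      (∀ k, c k ≠ k → k < c k → Δ' k = 2) →
      (∀ k, c k ≠ k → c k < k → Δ' k = -2) →
      (Finset.univ.filter fun k => 0 < Δ' k).card
        = (Finset.univ.filter fun k => c k = k ∧ 0 < (Polynomial.aeval (r k) q').re).card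
          + P1.card
      ∧ (Finset.univ.filter fun k => Δ' k < 0).card
        = (Finset.univ.filter fun k => c k = k ∧ (Polynomial.aeval (r k) q').re < 0).card
          + P2.card := by
    intro Δ' q' hreal' hlt' hgt'
    constructor
    · rw [← Finset.card_union_of_disjoint (by
        rw [Finset.disjoint_left]
        intro k hk1 hk2
        simp only [hP1, Finset.mem_filter, Finset.mem_univ, true_and] at hk1 hk2
        exact hk2.1 hk1.1)]
      congr 1
      ext k
      simp only [Finset.mem_filter, Finset.mem_univ, true_and, Finset.mem_union, hP1]
      constructor
      · intro h
        rcases eq_or_ne (c k) k with hk | hk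
        · exact Or.inl ⟨hk, by rwa [hreal' k hk] at h⟩
        · rcases lt_trichotomy k (c k) with h1 | h1 | h1
          · exact Or.inr ⟨hk, h1⟩
          · exact absurd h1.symm hk
          · rw [hgt' k hk h1] at h; norm_num at h
      · rintro (⟨hk, h⟩ | ⟨hk, h⟩)
        · rwa [hreal' k hk]
        · rw [hlt' k hk h]; norm_num
    · rw [← Finset.card_union_of_disjoint (by
        rw [Finset.disjoint_left]
        intro k hk1 hk2
        simp only [hP2, Finset.mem_filter, Finset.mem_univ, true_and] at hk1 hk2
        exact hk2.1 hk1.1)]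
      congr 1
      ext k
      simp only [Finset.mem_filter, Finset.mem_univ, true_and, Finset.mem_union, hP2]
      constructor
      · intro h
        rcases eq_or_ne (c k) k with hk | hk
        · exact Or.inl ⟨hk, by rwa [hreal' k hk] at h⟩
        · rcases lt_trichotomy k (c k) with h1 | h1 | h1
          · rw [hlt' k hk h1] at h; norm_num at h
          · exact absurd h1.symm hk
          · exact Or.inr ⟨hk, h1⟩
      · rintro (⟨hk, h⟩ | ⟨hk, h⟩)
        · rwa [hreal' k hk]
        · rw [hgt' k hk h]; norm_num
  obtain ⟨hposq, hnegq⟩ := hsplit Δ q hΔreal hΔlt hΔgt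
  obtain ⟨hpos1, hneg1⟩ := hsplit Δ1 1 hΔ1real hΔ1lt hΔ1gt
  -- for q' = 1 the real parts are all 1
  have hpos1' : (Finset.univ.filter fun k =>
      c k = k ∧ 0 < (Polynomial.aeval (r k) (1:Polynomial ℝ)).re).card = Sreal.card := by
    congr 1
    ext k
    simp [hSreal]
  have hneg1' : (Finset.univ.filter fun k =>
      c k = k ∧ (Polynomial.aeval (r k) (1:Polynomial ℝ)).re < 0).card = 0 := by
    rw [Finset.card_eq_zero]
    ext k
    simp
  rw [hposq, hnegq, hpos1, hneg1, hpos1', hneg1'] at hsig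
  -- conclude all real roots have positive q-value
  have hsubpos : (Finset.univ.filter fun k =>
      c k = k ∧ 0 < (Polynomial.aeval (r k) q).re) ⊆ Sreal := by
    intro k hk
    simp only [hSreal, Finset.mem_filter, Finset.mem_univ, true_and] at hk ⊢
    exact hk.1
  have hcardle := Finset.card_le_card hsubpos
  have hposall : ∀ k, c k = k → 0 < (Polynomial.aeval (r k) q).re := by
    have heq : (Finset.univ.filter fun k =>
        c k = k ∧ 0 < (Polynomial.aeval (r k) q).re) = Sreal := by
      apply Finset.eq_of_subset_of_card_le hsubpos
      omega
    intro k hk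
    have : k ∈ Sreal := by simp [hSreal, hk]
    rw [← heq] at this
    simp only [Finset.mem_filter, Finset.mem_univ, true_and] at this
    exact this.2
  -- final argument
  intro x hx habs
  have hxroot : ((x : ℂ)) ∈ pc.roots := by
    rw [mem_roots hpc0]
    rw [Polynomial.IsRoot, hpc, eval_map,
      show ((x:ℂ)) = algebraMap ℝ ℂ x from rfl, eval₂_hom]
    rw [show eval x p = 0 from hx, map_zero]
  obtain ⟨k, hk⟩ := hsurj _ hxroot
  have hck : c k = k := by
    apply hinj
    rw [hrc k, hk]
    simp
  have := hposall k hck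
  rw [hk] at this
  have haeval : Polynomial.aeval ((x : ℂ)) q = ((eval x q : ℝ) : ℂ) := by
    rw [show ((x:ℂ)) = algebraMap ℝ ℂ x from rfl, aeval_algebraMap_apply]
    simp
  rw [haeval] at this
  simp only [Complex.ofReal_re] at this
  have hqx : eval x q ≤ 0 := by
    rw [hq]
    simp only [eval_sub, eval_pow, eval_X, eval_C]
    obtain ⟨h1, h2⟩ := abs_le.mp habs
    linarith [sq_le_sq' h1 h2]
  linarith
end

section
/- Let A be a real symmetric Hankel matrix of size n (entries depending only on i+j) given by H[i,j] = s_{i+j−2}, where s_k are the power sums of the roots of a squarefree real polynomial p of degree n with r real roots and (n−r)/2 pairs of complex conjugate roots. Then H is congruent over ℝ to a block diagonal matrix with r blocks equal to (1) and (n−r)/2 blocks equal to the 2×2 matrix [[2,0],[0,−2]] up to positive scaling; in particular, σ(H) = r and H is nonsingular. -/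
open Polynomial Matrix

lemma sylvester_le {n : ℕ} (a b : Fin n → ℝ) (M : Matrix (Fin n) (Fin n) ℝ)
    (h : Matrix.diagonal a = Mᵀ * Matrix.diagonal b * M) :
    (Finset.univ.filter fun i => 0 < a i).card ≤
      (Finset.univ.filter fun i => 0 < b i).card := by
  classical
  set sa := Finset.univ.filter fun i => 0 < a i with hsa
  set sb := Finset.univ.filter fun i => 0 < b i with hsb
  -- the extension linear map
  let ext : (↥sa → ℝ) →ₗ[ℝ] (Fin n → ℝ) :=
    { toFun := fun y i => if h : i ∈ sa then y ⟨i, h⟩ else 0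
      map_add' := by intro y1 y2; funext i; by_cases hi : i ∈ sa <;> simp [hi]
      map_smul' := by intro c y; funext i; by_cases hi : i ∈ sa <;> simp [hi] }
  let res : (Fin n → ℝ) →ₗ[ℝ] (↥sb → ℝ) := LinearMap.funLeft ℝ ℝ (fun j : ↥sb => (j : Fin n))
  let ψ : (↥sa → ℝ) →ₗ[ℝ] (↥sb → ℝ) := res ∘ₗ M.mulVecLin ∘ₗ ext
  have hinj : Function.Injective ψ := by
    rw [← LinearMap.ker_eq_bot, LinearMap.ker_eq_bot']
    intro y hy
    set x : Fin n → ℝ := ext y with hx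
    have hxs : ∀ i, i ∉ sa → x i = 0 := by
      intro i hi; simp only [hx, ext, LinearMap.coe_mk, AddHom.coe_mk]; rw [dif_neg hi]
    have hw : ∀ j : Fin n, j ∈ sb → M.mulVec x j = 0 := by
      intro j hj
      have := congrFun hy ⟨j, hj⟩
      simpa [ψ, res, LinearMap.funLeft] using this
    -- quadratic form identity
    have hq : x ⬝ᵥ (Matrix.diagonal a).mulVec x
        = (M.mulVec x) ⬝ᵥ (Matrix.diagonal b).mulVec (M.mulVec x) := by
      rw [h]
      rw [← Matrix.mulVec_mulVec, ← Matrix.mulVec_mulVec, Matrix.dotProduct_mulVec,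
        Matrix.vecMul_transpose]
    have hq' : (∑ i, x i * (a i * x i)) = ∑ i, M.mulVec x i * (b i * M.mulVec x i) := by
      simpa [dotProduct, Matrix.mulVec_diagonal] using hq
    have hrhs : (∑ i, M.mulVec x i * (b i * M.mulVec x i)) ≤ 0 := by
      apply Finset.sum_nonpos
      intro i _
      by_cases hi : i ∈ sb
      · rw [hw i hi]; ring_nf; simp
      · have hb : b i ≤ 0 := by
          simp only [hsb, Finset.mem_filter, Finset.mem_univ, true_and] at hi; linarith
        have : M.mulVec x i * (b i * M.mulVec x i) = b i * (M.mulVec x i)^2 := by ring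
        rw [this]
        exact mul_nonpos_of_nonpos_of_nonneg hb (sq_nonneg _)
    have hterm : ∀ i ∈ Finset.univ, (0:ℝ) ≤ x i * (a i * x i) := by
      intro i _
      by_cases hi : i ∈ sa
      · have ha : 0 < a i := by
          simpa [hsa] using hi
        have : x i * (a i * x i) = a i * (x i)^2 := by ring
        rw [this]; positivity
      · rw [hxs i hi]; simp
    have hzero : (∑ i, x i * (a i * x i)) = 0 :=
      le_antisymm (hq' ▸ hrhs) (Finset.sum_nonneg hterm)
    have hall := (Finset.sum_eq_zero_iff_of_nonneg hterm).mp hzero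
    have hx0 : ∀ i, x i = 0 := by
      intro i
      by_cases hi : i ∈ sa
      · have ha : 0 < a i := by simpa [hsa] using hi
        have := hall i (Finset.mem_univ i)
        have h2 : a i * (x i)^2 = 0 := by nlinarith [this]
        have := pow_eq_zero_iff (n:=2) (by norm_num) |>.mp (by
          rcases mul_eq_zero.mp h2 with h3 | h3
          · exact absurd h3 (ne_of_gt ha)
          · exact h3)
        exact this
      · exact hxs i hi
    funext j
    have := hx0 (j : Fin n)
    simpa [hx, ext, j.2] using this
  have := LinearMap.finrank_le_finrank_of_injective hinj
  simpa [Module.finrank_fintype_fun_eq_card, Fintype.card_coe] using this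

lemma sylvester_eq {n : ℕ} (a b : Fin n → ℝ) (M : Matrix (Fin n) (Fin n) ℝ)
    (hM : IsUnit M.det)
    (h : Matrix.diagonal a = Mᵀ * Matrix.diagonal b * M) :
    (Finset.univ.filter fun i => 0 < a i).card =
      (Finset.univ.filter fun i => 0 < b i).card ∧
    (Finset.univ.filter fun i => a i < 0).card =
      (Finset.univ.filter fun i => b i < 0).card := by
  have hrev : Matrix.diagonal b = (M⁻¹)ᵀ * Matrix.diagonal a * M⁻¹ := by
    rw [h, Matrix.transpose_nonsing_inv]
    have e1 : (Mᵀ)⁻¹ * (Mᵀ * Matrix.diagonal b * M) * M⁻¹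
        = ((Mᵀ)⁻¹ * Mᵀ) * Matrix.diagonal b * (M * M⁻¹) := by
      simp only [Matrix.mul_assoc]
    rw [e1, Matrix.nonsing_inv_mul _ (by simpa [Matrix.det_transpose] using hM),
      Matrix.mul_nonsing_inv _ hM]
    simp
  have hneg : Matrix.diagonal (fun i => -a i) = Mᵀ * Matrix.diagonal (fun i => -b i) * M := by
    have : Matrix.diagonal (fun i => -a i) = -Matrix.diagonal a := by
      simp [Matrix.diagonal_neg]
    rw [this, h]
    have : Matrix.diagonal (fun i => -b i) = -Matrix.diagonal b := by
      simp [Matrix.diagonal_neg]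
    rw [this]
    noncomm_ring
  have hnegrev : Matrix.diagonal (fun i => -b i) = (M⁻¹)ᵀ * Matrix.diagonal (fun i => -a i) * M⁻¹ := by
    have : Matrix.diagonal (fun i => -b i) = -Matrix.diagonal b := by simp [Matrix.diagonal_neg]
    rw [this, hrev]
    have : Matrix.diagonal (fun i => -a i) = -Matrix.diagonal a := by simp [Matrix.diagonal_neg]
    rw [this]
    noncomm_ring
  constructor
  · exact le_antisymm (sylvester_le a b M h) (sylvester_le b a M⁻¹ hrev)
  · have h1 := sylvester_le (fun i => -a i) (fun i => -b i) M hneg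
    have h2 := sylvester_le (fun i => -b i) (fun i => -a i) M⁻¹ hnegrev
    simp only [neg_pos] at h1 h2
    exact le_antisymm h1 h2

/-- the Hankel matrix of power sums `H[i,j] = s_{i+j}` of the roots
of a squarefree real polynomial `p` of degree `n` with `r` real roots is congruent
over `ℝ` to a diagonal matrix with `r + (n-r)/2` positive entries (the `r` blocks
`(1)` and the positive halves of the `(n-r)/2` blocks `diag(2,-2)`, up to positive
scaling) and `(n-r)/2` negative entries; in particular `σ(H) = r` and `H` is
nonsingular. -/
theorem hankel_power_sum_inertia (n r : ℕ) (p : Polynomial ℝ)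
    (hmonic : p.Monic) (hsf : Squarefree p) (hdeg : p.natDegree = n)
    (z : Fin n → ℂ) (hinj : Function.Injective z)
    (hroots : p.map (algebraMap ℝ ℂ) = ∏ i : Fin n, (X - C (z i)))
    (hr : r = Multiset.card p.roots)
    (H : Matrix (Fin n) (Fin n) ℝ)
    (hH : ∀ i j : Fin n, (H i j : ℂ) = ∑ k : Fin n, z k ^ ((i : ℕ) + (j : ℕ))) :
    (∃ S : Matrix (Fin n) (Fin n) ℝ, ∃ d : Fin n → ℝ, IsUnit S.det ∧
      H = Sᵀ * Matrix.diagonal d * S ∧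
      (Finset.univ.filter fun i => 0 < d i).card = r + (n - r) / 2 ∧
      (Finset.univ.filter fun i => d i < 0).card = (n - r) / 2) ∧
    signature H = (r : ℤ) ∧ IsUnit H.det := by
  classical
  -- roots of the complexified polynomial
  have hprod : (∏ i : Fin n, (X - C (z i)))
      = (Multiset.map (fun w : ℂ => X - C w) (Multiset.map z Finset.univ.val)).prod := by
    rw [Multiset.map_map]
    rfl
  have hrootsC : (p.map (algebraMap ℝ ℂ)).roots = Multiset.map z Finset.univ.val := by
    rw [hroots, hprod, Polynomial.roots_multiset_prod_X_sub_C]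
  -- conjugation invariance
  have hqconj : (p.map (algebraMap ℝ ℂ)).map (starRingEnd ℂ) = p.map (algebraMap ℝ ℂ) := by
    rw [Polynomial.map_map]
    congr 1
    ext x
    simp [Complex.conj_ofReal]
  have hconjprod : (∏ i : Fin n, (X - C (z i)))
      = ∏ i : Fin n, (X - C ((starRingEnd ℂ) (z i))) := by
    conv_lhs => rw [← hroots, ← hqconj, hroots]
    rw [Polynomial.map_prod]
    simp
  have hmultconj : Multiset.map z Finset.univ.val
      = Multiset.map (fun i => (starRingEnd ℂ) (z i)) Finset.univ.val := by
    have h2 : (∏ i : Fin n, (X - C ((starRingEnd ℂ) (z i))))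
        = (Multiset.map (fun w : ℂ => X - C w)
            (Multiset.map (fun i => (starRingEnd ℂ) (z i)) Finset.univ.val)).prod := by
      rw [Multiset.map_map]
      rfl
    have := congrArg Polynomial.roots (hprod.symm.trans (hconjprod.trans h2))
    rwa [Polynomial.roots_multiset_prod_X_sub_C, Polynomial.roots_multiset_prod_X_sub_C] at this
  have hexists : ∀ k, ∃ l, z l = (starRingEnd ℂ) (z k) := by
    intro k
    have hmem : (starRingEnd ℂ) (z k) ∈ Multiset.map z Finset.univ.val := by
      rw [hmultconj]
      exact Multiset.mem_map_of_mem _ (Finset.mem_univ_val k)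
    obtain ⟨l, _, hl⟩ := Multiset.mem_map.mp hmem
    exact ⟨l, hl⟩
  set σ : Fin n → Fin n := fun k => (hexists k).choose with hσdef
  have hσ : ∀ k, z (σ k) = (starRingEnd ℂ) (z k) := fun k => (hexists k).choose_spec
  have hσσ : Function.Involutive σ := by
    intro k
    apply hinj
    rw [hσ, hσ, Complex.conj_conj]
  have him : ∀ k, (z (σ k)).im = -(z k).im := by
    intro k; rw [hσ]; exact Complex.conj_im _
  have hσfix : ∀ k, (z k).im = 0 → σ k = k := by
    intro k hk
    apply hinj
    rw [hσ, Complex.conj_eq_iff_im.mpr hk]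
  -- powers of real-valued roots remain real
  have hre : ∀ (w : ℂ), w.im = 0 → ∀ t : ℕ, w ^ t = ((w.re ^ t : ℝ) : ℂ) := by
    intro w hw t
    have hw' : w = (w.re : ℂ) := Complex.ext rfl (by simp [hw])
    rw [hw', ← Complex.ofReal_pow]
    simp
  have hrim : ∀ (k : Fin n), (z k).im = 0 → ∀ t : ℕ, (z k ^ t).im = 0 := by
    intro k hk t; rw [hre _ hk t]; exact Complex.ofReal_im _
  -- index sets
  set A0 := Finset.univ.filter (fun k : Fin n => (z k).im = 0) with hA0
  set Ap := Finset.univ.filter (fun k : Fin n => 0 < (z k).im) with hAp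
  set Am := Finset.univ.filter (fun k : Fin n => (z k).im < 0) with hAm
  -- r equals the number of real indices
  have hnodup : p.roots.Nodup :=
    Polynomial.nodup_roots (PerfectField.separable_iff_squarefree.mpr hsf)
  have hpne : p ≠ 0 := hmonic.ne_zero
  have hrootmem : ∀ x : ℝ, x ∈ p.roots → ∃ k, z k = (x : ℂ) := by
    intro x hx
    have hx' : p.IsRoot x := (Polynomial.mem_roots hpne).mp hx
    have hmem : ((x : ℂ)) ∈ (p.map (algebraMap ℝ ℂ)).roots := by
      rw [Polynomial.mem_roots ((Polynomial.map_ne_zero_iff (algebraMap ℝ ℂ).injective).mpr hpne)]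
      show Polynomial.eval ((x : ℂ)) (p.map (algebraMap ℝ ℂ)) = 0
      rw [Polynomial.eval_map]
      show Polynomial.eval₂ (algebraMap ℝ ℂ) ((algebraMap ℝ ℂ) x) p = 0
      rw [Polynomial.eval₂_at_apply, hx']
      simp
    rw [hrootsC] at hmem
    obtain ⟨k, _, hk⟩ := Multiset.mem_map.mp hmem
    exact ⟨k, hk⟩
  have hrealroot : ∀ k : Fin n, (z k).im = 0 → ((z k).re) ∈ p.roots := by
    intro k hk
    rw [Polynomial.mem_roots hpne]
    have hzmem : z k ∈ (p.map (algebraMap ℝ ℂ)).roots := by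
      rw [hrootsC]
      exact Multiset.mem_map_of_mem _ (Finset.mem_univ_val k)
    have hz0 : Polynomial.eval (z k) (p.map (algebraMap ℝ ℂ)) = 0 :=
      (Polynomial.mem_roots'.mp hzmem).2
    have hzk : z k = ((z k).re : ℂ) := Complex.ext rfl (by simp [hk])
    rw [hzk] at hz0
    rw [Polynomial.eval_map] at hz0
    have h3 : Polynomial.eval₂ (algebraMap ℝ ℂ) ((algebraMap ℝ ℂ) ((z k).re)) p = 0 := hz0
    rw [Polynomial.eval₂_at_apply] at h3
    show Polynomial.eval ((z k).re) p = 0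
    apply (algebraMap ℝ ℂ).injective
    rw [map_zero]
    exact h3
  have hr0 : r = A0.card := by
    rw [hr, ← Multiset.toFinset_card_of_nodup hnodup]
    apply Finset.card_bij
      (fun (x : ℝ) (hx : x ∈ p.roots.toFinset) =>
        (hrootmem x (Multiset.mem_toFinset.mp hx)).choose)
    · intro x hx
      have hspec := (hrootmem x (Multiset.mem_toFinset.mp hx)).choose_spec
      simp only [hA0, Finset.mem_filter, Finset.mem_univ, true_and]
      rw [hspec]
      simp
    · intro x1 hx1 x2 hx2 he
      have h1 := (hrootmem x1 (Multiset.mem_toFinset.mp hx1)).choose_spec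
      have h2 := (hrootmem x2 (Multiset.mem_toFinset.mp hx2)).choose_spec
      rw [he, h2] at h1
      exact_mod_cast h1.symm
    · intro k hk
      simp only [hA0, Finset.mem_filter, Finset.mem_univ, true_and] at hk
      refine ⟨(z k).re, Multiset.mem_toFinset.mpr (hrealroot k hk), ?_⟩
      apply hinj
      have hspec := (hrootmem _ (hrealroot k hk)).choose_spec
      rw [hspec]
      exact Complex.ext (by simp) (by simp [hk])
  have hpm : Ap.card = Am.card := by
    apply Finset.card_bij (fun k _ => σ k)
    · intro k hk
      simp only [hAp, Finset.mem_filter, Finset.mem_univ, true_and] at hk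
      simp only [hAm, Finset.mem_filter, Finset.mem_univ, true_and, him k]
      linarith
    · intro k1 h1 k2 h2 he
      exact hσσ.injective he
    · intro k hk
      simp only [hAm, Finset.mem_filter, Finset.mem_univ, true_and] at hk
      refine ⟨σ k, ?_, hσσ k⟩
      simp only [hAp, Finset.mem_filter, Finset.mem_univ, true_and, him k]
      linarith
  have hsum : A0.card + Ap.card + Am.card = n := by
    have h1 : A0.card + (Finset.univ.filter (fun k : Fin n => ¬ (z k).im = 0)).card
        = Finset.univ.card := Finset.card_filter_add_card_filter_not _
    have h2 : Finset.univ.filter (fun k : Fin n => ¬ (z k).im = 0) = Ap ∪ Am := by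
      ext k
      simp only [Finset.mem_filter, Finset.mem_univ, true_and, Finset.mem_union, hAp, hAm]
      constructor
      · intro h
        rcases lt_or_gt_of_ne (Ne.symm h) with h' | h'
        · exact Or.inl h'
        · exact Or.inr h'
      · rintro (h | h) <;> intro h0 <;> rw [h0] at h <;> exact lt_irrefl 0 h
    have hdisj : Disjoint Ap Am := by
      rw [Finset.disjoint_left]
      intro k h1 h2
      simp only [hAp, hAm, Finset.mem_filter, Finset.mem_univ, true_and] at h1 h2
      linarith
    rw [h2, Finset.card_union_of_disjoint hdisj] at h1
    simp only [Finset.card_univ, Fintype.card_fin] at h1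
    omega
  -- the congruence data
  set d : Fin n → ℝ := fun k => if (z k).im = 0 then 1 else if 0 < (z k).im then 2 else -2
    with hd
  set S : Matrix (Fin n) (Fin n) ℝ :=
    Matrix.of (fun k j : Fin n => if (z k).im < 0 then (z k ^ (j : ℕ)).im else (z k ^ (j : ℕ)).re)
    with hS
  have hd0 : ∀ k, (z k).im = 0 → d k = 1 := by
    intro k hk; rw [hd]; simp [hk]
  have hdp' : ∀ k, 0 < (z k).im → d k = 2 := by
    intro k hk; rw [hd]
    simp only
    rw [if_neg (by linarith), if_pos hk]
  have hdm' : ∀ k, (z k).im < 0 → d k = -2 := by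
    intro k hk; rw [hd]
    simp only
    rw [if_neg (by linarith), if_neg (by linarith)]
  have hSre : ∀ k : Fin n, ¬ ((z k).im < 0) → ∀ t : Fin n, S k t = (z k ^ (t : ℕ)).re := by
    intro k hk t; rw [hS]; simp only [Matrix.of_apply]; rw [if_neg hk]
  have hSim : ∀ k : Fin n, (z k).im < 0 → ∀ t : Fin n, S k t = (z k ^ (t : ℕ)).im := by
    intro k hk t; rw [hS]; simp only [Matrix.of_apply]; rw [if_pos hk]
  -- key pairing identity
  have key : ∀ k : Fin n, 0 < (z k).im → ∀ i j : Fin n,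
      S k i * d k * S k j + S (σ k) i * d (σ k) * S (σ k) j
        = 2 * ((z k ^ (i : ℕ)) * (z k ^ (j : ℕ))).re := by
    intro k hk i j
    have h1 : ¬ (z k).im < 0 := by linarith
    have h2 : (z (σ k)).im < 0 := by rw [him]; linarith
    have hSσ : ∀ t : Fin n, S (σ k) t = -(z k ^ (t : ℕ)).im := by
      intro t
      rw [hSim _ h2, hσ, ← map_pow]
      exact Complex.conj_im _
    rw [hSre k h1, hSre k h1, hSσ, hSσ, hdp' k hk, hdm' _ h2, Complex.mul_re]
    ring
  have hpair : ∀ (k : Fin n) (i j : Fin n),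
      S k i * d k * S k j + S (σ k) i * d (σ k) * S (σ k) j
        = 2 * ((z k ^ (i : ℕ)) * (z k ^ (j : ℕ))).re := by
    intro k i j
    rcases lt_trichotomy (z k).im 0 with hk | hk | hk
    · have hk' : 0 < (z (σ k)).im := by rw [him]; linarith
      have hthis := key (σ k) hk' i j
      rw [hσσ k] at hthis
      have hre2 : ((z (σ k) ^ (i : ℕ)) * (z (σ k) ^ (j : ℕ))).re
          = ((z k ^ (i : ℕ)) * (z k ^ (j : ℕ))).re := by
        rw [hσ, ← map_pow, ← map_pow, Complex.mul_re, Complex.mul_re, Complex.conj_re,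
          Complex.conj_re, Complex.conj_im, Complex.conj_im]
        ring
      rw [hre2] at hthis
      linarith [hthis]
    · have hnl : ¬ (z k).im < 0 := by rw [hk]; exact lt_irrefl 0
      rw [hσfix k hk, hSre k hnl i, hSre k hnl j, hd0 k hk, Complex.mul_re,
        hrim k hk, hrim k hk]
      ring
    · exact key k hk i j
  -- entrywise identity
  have hentry : ∀ i j : Fin n, (Sᵀ * Matrix.diagonal d * S) i j
      = ∑ k, S k i * d k * S k j := by
    intro i j
    rw [Matrix.mul_apply]
    apply Finset.sum_congr rfl
    intro k _
    rw [Matrix.mul_diagonal, Matrix.transpose_apply]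
  have hsumreal : ∀ i j : Fin n, ∑ k, S k i * d k * S k j
      = ∑ k, (z k ^ ((i : ℕ) + (j : ℕ))).re := by
    intro i j
    apply mul_left_cancel₀ (two_ne_zero (α := ℝ))
    have hswap : ∑ k, S (σ k) i * d (σ k) * S (σ k) j = ∑ k, S k i * d k * S k j :=
      hσσ.bijective.sum_comp (fun l => S l i * d l * S l j)
    calc 2 * ∑ k, S k i * d k * S k j
        = ∑ k, S k i * d k * S k j + ∑ k, S (σ k) i * d (σ k) * S (σ k) j := by
          rw [hswap]; ring
      _ = ∑ k, (S k i * d k * S k j + S (σ k) i * d (σ k) * S (σ k) j) := by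
          rw [← Finset.sum_add_distrib]
      _ = ∑ k, 2 * ((z k ^ (i : ℕ)) * (z k ^ (j : ℕ))).re :=
          Finset.sum_congr rfl (fun k _ => hpair k i j)
      _ = 2 * ∑ k, (z k ^ ((i : ℕ) + (j : ℕ))).re := by
          rw [Finset.mul_sum]
          exact Finset.sum_congr rfl (fun k _ => by rw [pow_add])
  have hsumC : ∀ i j : Fin n, (H i j : ℂ)
      = ((∑ k, (z k ^ ((i : ℕ) + (j : ℕ))).re : ℝ) : ℂ) := by
    intro i j
    apply mul_left_cancel₀ (two_ne_zero (α := ℂ))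
    rw [hH i j]
    have hswap : ∑ k, z (σ k) ^ ((i : ℕ) + (j : ℕ)) = ∑ k, z k ^ ((i : ℕ) + (j : ℕ)) :=
      hσσ.bijective.sum_comp (fun l => z l ^ ((i : ℕ) + (j : ℕ)))
    calc 2 * ∑ k, z k ^ ((i : ℕ) + (j : ℕ))
        = ∑ k, z k ^ ((i : ℕ) + (j : ℕ)) + ∑ k, z (σ k) ^ ((i : ℕ) + (j : ℕ)) := by
          rw [hswap]; ring
      _ = ∑ k, (z k ^ ((i : ℕ) + (j : ℕ)) + (starRingEnd ℂ) (z k ^ ((i : ℕ) + (j : ℕ)))) := by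
          rw [← Finset.sum_add_distrib]
          exact Finset.sum_congr rfl (fun k _ => by rw [hσ, map_pow])
      _ = ∑ k, (((2 * (z k ^ ((i : ℕ) + (j : ℕ))).re : ℝ)) : ℂ) :=
          Finset.sum_congr rfl (fun k _ => Complex.add_conj _)
      _ = 2 * ((∑ k, (z k ^ ((i : ℕ) + (j : ℕ))).re : ℝ) : ℂ) := by
          push_cast
          rw [Finset.mul_sum]
  have hHS : H = Sᵀ * Matrix.diagonal d * S := by
    ext i j
    rw [hentry i j, hsumreal i j]
    exact_mod_cast hsumC i j
  -- invertibility of S via the Vandermonde matrix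
  set c1 : Fin n → ℂ := fun k =>
    if (z k).im = 0 then 1 else if 0 < (z k).im then 1 else Complex.I with hc1
  set c2 : Fin n → ℂ := fun k =>
    if (z k).im = 0 then 0 else if 0 < (z k).im then -Complex.I else 1 with hc2
  set Q : Matrix (Fin n) (Fin n) ℂ := Matrix.of (fun k l =>
    (if l = k then c1 k else 0) + (if l = σ k then c2 k else 0)) with hQ
  have hvdm : Matrix.vandermonde z = Q * (S.map ((↑) : ℝ → ℂ)) := by
    ext k j
    rw [Matrix.mul_apply]
    have hrow : ∀ l, Q k l * (S.map ((↑) : ℝ → ℂ)) l j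
        = (if l = k then c1 k * ((S k j : ℝ) : ℂ) else 0)
          + (if l = σ k then c2 k * ((S (σ k) j : ℝ) : ℂ) else 0) := by
      intro l
      rw [hQ]
      simp only [Matrix.of_apply, Matrix.map_apply, add_mul, ite_mul, zero_mul]
      congr 1
      · split_ifs with h
        · rw [h]
        · rfl
      · split_ifs with h
        · rw [h]
        · rfl
    rw [Finset.sum_congr rfl (fun l _ => hrow l), Finset.sum_add_distrib,
      Finset.sum_ite_eq' Finset.univ k, Finset.sum_ite_eq' Finset.univ (σ k),
      if_pos (Finset.mem_univ k), if_pos (Finset.mem_univ (σ k))]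
    rw [Matrix.vandermonde_apply]
    rcases lt_trichotomy (z k).im 0 with hk | hk | hk
    · have h1 : ¬ (z k).im = 0 := by linarith
      have h2 : ¬ 0 < (z k).im := by linarith
      have h3 : ¬ (z (σ k)).im < 0 := by rw [him]; linarith
      rw [hc1, hc2]
      simp only
      rw [if_neg h1, if_neg h2, if_neg h1, if_neg h2, hSim k hk j, hSre (σ k) h3 j,
        hσ, ← map_pow, Complex.conj_re]
      have := Complex.re_add_im (z k ^ (j : ℕ))
      linear_combination this.symm
    · have h3 : ¬ (z k).im < 0 := by rw [hk]; exact lt_irrefl 0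
      rw [hc1, hc2]
      simp only
      rw [if_pos hk, if_pos hk, hSre k h3 j, hre _ hk]
      simp [← Complex.ofReal_pow]
    · have h1 : ¬ (z k).im = 0 := by linarith
      have h3 : ¬ (z k).im < 0 := by linarith
      have h4 : (z (σ k)).im < 0 := by rw [him]; linarith
      rw [hc1, hc2]
      simp only
      rw [if_neg h1, if_pos hk, if_neg h1, if_pos hk, hSre k h3 j, hSim (σ k) h4 j,
        hσ, ← map_pow, Complex.conj_im]
      have := Complex.re_add_im (z k ^ (j : ℕ))
      push_cast
      linear_combination this.symm
  have hdetS : IsUnit S.det := by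
    have hv : (Matrix.vandermonde z).det ≠ 0 := Matrix.det_vandermonde_ne_zero_iff.mpr hinj
    rw [hvdm, Matrix.det_mul] at hv
    have hmapdet : (S.map ((↑) : ℝ → ℂ)).det = ((S.det : ℝ) : ℂ) :=
      (RingHom.map_det Complex.ofRealHom S).symm
    rw [isUnit_iff_ne_zero]
    intro h0
    rw [hmapdet, h0] at hv
    simp at hv
  -- counts of positive and negative entries of d
  have hcount_pos : (Finset.univ.filter fun i => 0 < d i) = A0 ∪ Ap := by
    ext k
    simp only [Finset.mem_filter, Finset.mem_univ, true_and, Finset.mem_union, hA0, hAp]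
    rcases lt_trichotomy (z k).im 0 with h | h | h
    · rw [hdm' k h]
      constructor
      · intro hh; norm_num at hh
      · rintro (hh | hh) <;> linarith
    · rw [hd0 k h]
      constructor
      · intro _; exact Or.inl h
      · intro _; norm_num
    · rw [hdp' k h]
      constructor
      · intro _; exact Or.inr h
      · intro _; norm_num
  have hcount_neg : (Finset.univ.filter fun i => d i < 0) = Am := by
    ext k
    simp only [Finset.mem_filter, Finset.mem_univ, true_and, hAm]
    rcases lt_trichotomy (z k).im 0 with h | h | h
    · rw [hdm' k h]
      constructor
      · intro _; exact h
      · intro _; norm_num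
    · rw [hd0 k h]
      constructor
      · intro hh; norm_num at hh
      · intro hh; linarith
    · rw [hdp' k h]
      constructor
      · intro hh; norm_num at hh
      · intro hh; linarith
  have hdisj0p : Disjoint A0 Ap := by
    rw [Finset.disjoint_left]
    intro k h1 h2
    simp only [hA0, hAp, Finset.mem_filter, Finset.mem_univ, true_and] at h1 h2
    linarith
  have hmval : (n - r) / 2 = Ap.card := by omega
  have hposcard : (Finset.univ.filter fun i => 0 < d i).card = r + (n - r) / 2 := by
    rw [hcount_pos, Finset.card_union_of_disjoint hdisj0p, hmval, hr0]
  have hnegcard : (Finset.univ.filter fun i => d i < 0).card = (n - r) / 2 := by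
    rw [hcount_neg, hmval, hpm]
  -- Hermitian property
  have hherm : H.IsHermitian := by
    rw [hHS, ← Matrix.conjTranspose_eq_transpose_of_trivial S]
    exact Matrix.isHermitian_conjTranspose_mul_mul S (Matrix.isHermitian_diagonal d)
  -- spectral theorem and Sylvester's law of inertia
  set U : Matrix (Fin n) (Fin n) ℝ := (hherm.eigenvectorUnitary : Matrix (Fin n) (Fin n) ℝ)
    with hU
  have hUdet : IsUnit U.det := by
    have hmem : star U * U = 1 := by
      rw [hU]
      exact Matrix.mem_unitaryGroup_iff'.mp hherm.eigenvectorUnitary.2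
    have : (star U).det * U.det = 1 := by rw [← Matrix.det_mul, hmem, Matrix.det_one]
    exact IsUnit.of_mul_eq_one _ (mul_comm (star U).det U.det ▸ this)
  have hspec : star U * H * U = Matrix.diagonal hherm.eigenvalues := by
    have := hherm.conjStarAlgAut_star_eigenvectorUnitary
    simp only [Unitary.conjStarAlgAut_star_apply, Unitary.coe_star] at this
    rw [← hU] at this
    rw [this]
    rw [RCLike.ofReal_real_eq_id]
    rfl
  have hstarU : star U = Uᵀ := by
    rw [Matrix.star_eq_conjTranspose, Matrix.conjTranspose_eq_transpose_of_trivial]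
  have hcong : Matrix.diagonal hherm.eigenvalues = (S * U)ᵀ * Matrix.diagonal d * (S * U) := by
    rw [← hspec, hstarU, hHS, Matrix.transpose_mul]
    simp only [Matrix.mul_assoc]
  have hSU : IsUnit (S * U).det := by
    rw [Matrix.det_mul]
    exact hdetS.mul hUdet
  obtain ⟨hpe, hne⟩ := sylvester_eq hherm.eigenvalues d (S * U) hSU hcong
  have hsig : signature H = (r : ℤ) := by
    simp only [signature, dif_pos hherm]
    rw [hpe, hne, hposcard, hnegcard]
    push_cast
    ring
  have hdetH : IsUnit H.det := by
    rw [hHS, isUnit_iff_ne_zero, Matrix.det_mul, Matrix.det_mul, Matrix.det_transpose,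
      Matrix.det_diagonal]
    have hdS : S.det ≠ 0 := isUnit_iff_ne_zero.mp hdetS
    have hdd : ∏ i, d i ≠ 0 := by
      apply Finset.prod_ne_zero_iff.mpr
      intro k _
      rcases lt_trichotomy (z k).im 0 with h | h | h
      · rw [hdm' k h]; norm_num
      · rw [hd0 k h]; norm_num
      · rw [hdp' k h]; norm_num
    exact mul_ne_zero (mul_ne_zero hdS hdd) hdS
  exact ⟨⟨S, d, hdetS, hHS, hposcard, hnegcard⟩, hsig, hdetH⟩
end
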